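/- arXiv:1306.3706 — 4 statements merged into one kernel-verified Lean document; each statement's English description precedes it below -/
import Mathlib

section
/- For any λ ∈ ℝ^p with E‖X‖ < ∞, the following score identity holds: E[X (Y − 1/2) a_λ(X, Y)] = (1/2) E[X (Y − σ(λ'X))]. That is, the gradient of the local case-control subsample risk Q_λ evaluated at θ = λ equals half the full-population logistic score evaluated at λ, up to the factor ā(λ)^{-1}. -/
open MeasureTheory ProbabilityTheory Real Filter
open scoped ENNReal NNReal RealInnerProductSpace Topology BoundedContinuousFunction

noncomputable section

/-- Shorthand for `ℝ^d` with the Euclidean inner product. -/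
abbrev Evec (d : ℕ) := EuclideanSpace ℝ (Fin d)

/-- The logistic sigmoid `σ(t) = eᵗ / (1 + eᵗ)`. -/
def sigm (t : ℝ) : ℝ := Real.exp t / (1 + Real.exp t)

/-- The soft hinge function `h(η; π) = -π η + log (1 + e^η)`. -/
def softHinge (η pr : ℝ) : ℝ := -pr * η + Real.log (1 + Real.exp η)

variable {d : ℕ}

/-- The joint law of `(X, Y)` on `ℝ^d × ℝ` determined by the marginal law `ν` of `X`
and the conditional probability `pf x = P(Y = 1 | X = x)`; `Y ∈ {0, 1}`. -/
def jointLaw (ν : Measure (Evec d)) (pf : Evec d → ℝ) : Measure (Evec d × ℝ) :=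
  ν.bind fun x => ENNReal.ofReal (pf x) • Measure.dirac (x, (1 : ℝ)) +
    ENNReal.ofReal (1 - pf x) • Measure.dirac (x, (0 : ℝ))

/-- The logistic loss `ρ(θ; x, y) = -y θ'x + log (1 + exp (θ'x))` (intercept absorbed). -/
def logisticLoss (θ : Evec d) (xy : Evec d × ℝ) : ℝ :=
  -xy.2 * ⟪θ, xy.1⟫ + Real.log (1 + Real.exp ⟪θ, xy.1⟫)

/-- The conditional log-odds `f(x) = logit p(x)`. -/
def flogit (pf : Evec d → ℝ) (x : Evec d) : ℝ := Real.log (pf x / (1 - pf x))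

/-- Local case-control acceptance probability `a_λ(x, y) = |y - σ(λ'x)|`. -/
def accProb (lam : Evec d) (xy : Evec d × ℝ) : ℝ := |xy.2 - sigm ⟪lam, xy.1⟫|

/-- Marginal acceptance probability `ā(λ) = E[a_λ(X, Y)]`. -/
def aBar (μ : Measure (Evec d × ℝ)) (lam : Evec d) : ℝ := ∫ xy, accProb lam xy ∂μ

/-- Conditional acceptance probability `â_λ(x) = σ(λ'x)(1 - p(x)) + (1 - σ(λ'x)) p(x)`. -/
def aHat (pf : Evec d → ℝ) (lam x : Evec d) : ℝ :=
  sigm ⟪lam, x⟫ * (1 - pf x) + (1 - sigm ⟪lam, x⟫) * pf x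

/-- The tilted (biased subsampling) measure `dP_λ = a_λ dP / ā(λ)`. -/
def tiltedLaw (μ : Measure (Evec d × ℝ)) (lam : Evec d) : Measure (Evec d × ℝ) :=
  μ.withDensity fun xy => ENNReal.ofReal (accProb lam xy / aBar μ lam)

/-- Population risk under the tilted measure: `R_λ(θ) = E_{P_λ}[ρ(θ; X, Y)]`. -/
def Rpop (μ : Measure (Evec d × ℝ)) (lam θ : Evec d) : ℝ :=
  ∫ xy, logisticLoss θ xy ∂(tiltedLaw μ lam)

/-- Recentred population risk `Q_λ(θ) = R_λ(θ - λ)`. -/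
def Qpop (μ : Measure (Evec d × ℝ)) (lam θ : Evec d) : ℝ := Rpop μ lam (θ - lam)

/-- Nonseparability: no nonzero direction `v` separates the two classes. -/
def NonSep (μ : Measure (Evec d × ℝ)) : Prop :=
  ¬ ∃ v : Evec d, v ≠ 0 ∧ μ {xy | xy.2 = 0 ∧ 0 < ⟪v, xy.1⟫} = 0 ∧
    μ {xy | xy.2 = 1 ∧ ⟪v, xy.1⟫ < 0} = 0

/-- Nondegeneracy: there is no nonzero `v` with `E|v'X| = 0`. -/
def NonDegen (μ : Measure (Evec d × ℝ)) : Prop :=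
  ∀ v : Evec d, v ≠ 0 → ∫ xy, |⟪v, xy.1⟫| ∂μ ≠ 0


lemma sigm_mem (t : ℝ) : sigm t ∈ Set.Icc (0:ℝ) 1 := by
  have h1 : (0:ℝ) < 1 + Real.exp t := by positivity
  constructor
  · exact div_nonneg (Real.exp_pos t).le h1.le
  · rw [sigm, div_le_one h1]; linarith

lemma jointLaw_ae_y {d : ℕ} (ν : Measure (Evec d)) (pf : Evec d → ℝ)
    (hpf_meas : Measurable pf) :
    ∀ᵐ xy ∂(jointLaw ν pf), xy.2 = 0 ∨ xy.2 = 1 := by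
  rw [ae_iff]
  set s : Set (Evec d × ℝ) := {xy | ¬ (xy.2 = 0 ∨ xy.2 = 1)} with hs
  have hsm : MeasurableSet s := by
    apply MeasurableSet.compl (MeasurableSet.union ?_ ?_)
    · exact measurable_snd (measurableSet_singleton 0)
    · exact measurable_snd (measurableSet_singleton 1)
  have hmeas : Measurable fun x : Evec d =>
      (ENNReal.ofReal (pf x) • Measure.dirac (x, (1 : ℝ)) +
        ENNReal.ofReal (1 - pf x) • Measure.dirac (x, (0 : ℝ))) := by
    apply Measure.measurable_of_measurable_coe
    intro t ht
    simp only [Measure.add_apply, Measure.smul_apply, smul_eq_mul,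
      Measure.dirac_apply' _ ht]
    apply Measurable.add
    · exact ((ENNReal.measurable_ofReal.comp hpf_meas).mul
        ((measurable_one.indicator ht).comp (measurable_id.prodMk measurable_const)))
    · exact ((ENNReal.measurable_ofReal.comp (measurable_const.sub hpf_meas)).mul
        ((measurable_one.indicator ht).comp (measurable_id.prodMk measurable_const)))
  rw [jointLaw, Measure.bind_apply hsm hmeas.aemeasurable]
  have : ∀ x : Evec d, (ENNReal.ofReal (pf x) • Measure.dirac (x, (1 : ℝ)) +
      ENNReal.ofReal (1 - pf x) • Measure.dirac (x, (0 : ℝ))) s = 0 := by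
    intro x
    simp only [Measure.add_apply, Measure.smul_apply, smul_eq_mul,
      Measure.dirac_apply' _ hsm]
    have h1 : (x, (1:ℝ)) ∉ s := by simp [hs]
    have h0 : (x, (0:ℝ)) ∉ s := by simp [hs]
    rw [Set.indicator_of_notMem h1, Set.indicator_of_notMem h0]
    simp
  simp [this]

/-- The score identity `E[X (Y - 1/2) a_λ(X, Y)] = (1/2) E[X (Y - σ(λ'X))]`:
the gradient of the local case-control subsample risk `Q_λ` at `θ = λ` equals half the
full-population logistic score at `λ` (up to the factor `ā(λ)⁻¹`). -/
theorem lcc_score_identity {d : ℕ}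
    (ν : Measure (Evec d)) [IsProbabilityMeasure ν]
    (pf : Evec d → ℝ) (hpf_meas : Measurable pf) (hpf : ∀ x, pf x ∈ Set.Icc (0 : ℝ) 1)
    (hX : Integrable (fun xy : Evec d × ℝ => ‖xy.1‖) (jointLaw ν pf))
    (lam : Evec d) :
    ∫ xy, ((xy.2 - 1 / 2) * accProb lam xy) • xy.1 ∂(jointLaw ν pf) =
      (1 / 2 : ℝ) • ∫ xy, (xy.2 - sigm ⟪lam, xy.1⟫) • xy.1 ∂(jointLaw ν pf) := by
  rw [← integral_smul]
  apply integral_congr_ae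
  filter_upwards [jointLaw_ae_y ν pf hpf_meas] with xy h
  obtain ⟨hσ0, hσ1⟩ := sigm_mem ⟪lam, xy.1⟫
  rcases h with h | h <;> rw [accProb, h] <;>
    [rw [abs_of_nonpos (by linarith)]; rw [abs_of_nonneg (by linarith)]] <;>
    rw [smul_smul] <;> ring_nf
end
end

section
/- Assume E‖X‖ < ∞, nonseparability, and that there is no nonzero v ∈ ℝ^p with E|v'X| = 0. Let θ* = argmin_θ E[ρ(θ; X, Y)] be the population risk minimizer (best linear predictor) for P. Then θ* = argmin_θ Q_{θ*}(θ) = θ̄(θ*); that is, local case-control sampling with pilot equal to θ* has population optimum exactly θ*. -/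
open MeasureTheory ProbabilityTheory Real Filter
open scoped ENNReal NNReal RealInnerProductSpace Topology BoundedContinuousFunction

noncomputable section

variable {d : ℕ}

/-! ### Auxiliary scalar lemmas -/

namespace LccAux

/-- `log (1 + eᵗ)`. -/
def lphi (t : ℝ) : ℝ := Real.log (1 + Real.exp t)

lemma sigm_pos (t : ℝ) : 0 < sigm t := by unfold sigm; positivity

lemma sigm_lt_one (t : ℝ) : sigm t < 1 := by
  unfold sigm
  rw [div_lt_one (by positivity)]
  linarith

lemma sigm_zero : sigm 0 = 1/2 := by simp [sigm]; norm_num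

lemma sigm_strictMono : StrictMono sigm := by
  intro s t hst
  unfold sigm
  rw [div_lt_div_iff₀ (by positivity) (by positivity)]
  have := Real.exp_lt_exp.2 hst
  nlinarith [Real.exp_pos s, Real.exp_pos t]

lemma continuous_sigm : Continuous sigm := by
  apply Real.continuous_exp.div (continuous_const.add Real.continuous_exp)
  intro t; exact (add_pos one_pos (Real.exp_pos t)).ne'

lemma hasDerivAt_lphi (s : ℝ) : HasDerivAt lphi (sigm s) s := by
  have h1 : HasDerivAt (fun t => 1 + Real.exp t) (Real.exp s) s :=
    (Real.hasDerivAt_exp s).const_add 1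
  have := h1.log (by positivity)
  unfold lphi; simpa [sigm] using this

lemma differentiable_lphi : Differentiable ℝ lphi := fun s => (hasDerivAt_lphi s).differentiableAt

lemma deriv_lphi : deriv lphi = sigm := funext fun s => (hasDerivAt_lphi s).deriv

lemma strictConvexOn_lphi : StrictConvexOn ℝ Set.univ lphi := by
  refine StrictMono.strictConvexOn_univ_of_deriv differentiable_lphi.continuous ?_
  rw [deriv_lphi]; exact sigm_strictMono

/-- Tangent line inequality for `lphi` at `0`. -/
lemma lphi_tangent (t : ℝ) : lphi 0 + (1/2) * t ≤ lphi t := by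
  rcases lt_trichotomy t 0 with h | rfl | h
  · have := strictConvexOn_lphi.slope_lt_of_hasDerivWithinAt_Iio (Set.mem_univ t)
      (Set.mem_univ 0) h ((hasDerivAt_lphi 0).hasDerivWithinAt)
    rw [slope_def_field, sigm_zero] at this
    rw [div_lt_iff₀ (by linarith : (0:ℝ) < 0 - t)] at this
    nlinarith
  · simp
  · have := strictConvexOn_lphi.lt_slope_of_hasDerivAt (Set.mem_univ 0)
      (Set.mem_univ t) h (hasDerivAt_lphi 0)
    rw [slope_def_field, sigm_zero] at this
    rw [lt_div_iff₀ (by linarith : (0:ℝ) < t - 0)] at this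
    nlinarith

lemma lphi_tangent_strict {t : ℝ} (ht : t ≠ 0) : lphi 0 + (1/2) * t < lphi t := by
  rcases lt_trichotomy t 0 with h | h | h
  · have := strictConvexOn_lphi.slope_lt_of_hasDerivWithinAt_Iio (Set.mem_univ t)
      (Set.mem_univ 0) h ((hasDerivAt_lphi 0).hasDerivWithinAt)
    rw [slope_def_field, sigm_zero] at this
    rw [div_lt_iff₀ (by linarith : (0:ℝ) < 0 - t)] at this
    nlinarith
  · exact absurd h ht
  · have := strictConvexOn_lphi.lt_slope_of_hasDerivAt (Set.mem_univ 0)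
      (Set.mem_univ t) h (hasDerivAt_lphi 0)
    rw [slope_def_field, sigm_zero] at this
    rw [lt_div_iff₀ (by linarith : (0:ℝ) < t - 0)] at this
    nlinarith

/-- Scalar logistic loss. -/
def ell (y s : ℝ) : ℝ := -y * s + lphi s

lemma hasDerivAt_ell (y s : ℝ) : HasDerivAt (ell y) (sigm s - y) s := by
  have h1 : HasDerivAt (fun s : ℝ => -y * s) (-y) s := by
    simpa using (hasDerivAt_id s).const_mul (-y)
  have h2 := h1.add (hasDerivAt_lphi s)
  have : sigm s - y = -y + sigm s := by ring
  rw [this]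
  exact h2

lemma continuous_ell : Continuous (fun p : ℝ × ℝ => ell p.1 p.2) := by
  unfold ell lphi
  apply Continuous.add
  · exact (continuous_fst.neg).mul continuous_snd
  · apply Continuous.log
    · exact continuous_const.add (Real.continuous_exp.comp continuous_snd)
    · intro p; positivity

/-- Lipschitz bound for the scalar logistic loss when `y ∈ [0,1]`. -/
lemma ell_lipschitz {y : ℝ} (hy : y ∈ Set.Icc (0:ℝ) 1) (s t : ℝ) :
    |ell y t - ell y s| ≤ |t - s| := by
  have key : ∀ u : ℝ, ‖sigm u - y‖ ≤ 1 := by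
    intro u
    rw [Real.norm_eq_abs, abs_le]
    constructor <;> nlinarith [sigm_pos u, sigm_lt_one u, hy.1, hy.2]
  have := Convex.norm_image_sub_le_of_norm_hasDerivWithin_le
    (f := ell y) (f' := fun u => sigm u - y) (C := 1) (s := Set.univ)
    (fun u _ => (hasDerivAt_ell y u).hasDerivWithinAt)
    (fun u _ => key u) convex_univ (Set.mem_univ s) (Set.mem_univ t)
  simpa [Real.norm_eq_abs] using this

lemma ell_tangent_zero (y t : ℝ) : ell y 0 + (1/2 - y) * t ≤ ell y t := by
  have := lphi_tangent t
  simp only [ell]; nlinarith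

lemma ell_tangent_zero_strict (y : ℝ) {t : ℝ} (ht : t ≠ 0) :
    ell y 0 + (1/2 - y) * t < ell y t := by
  have := lphi_tangent_strict ht
  simp only [ell]; nlinarith

/-- Growth bound: `|ell y s| ≤ 2|s| + 1` for `y ∈ [0,1]`. -/
lemma ell_abs_le {y : ℝ} (hy : y ∈ Set.Icc (0:ℝ) 1) (s : ℝ) : |ell y s| ≤ 2 * |s| + 1 := by
  have h0 : 0 < 1 + Real.exp s := by positivity
  have hphi0 : 0 ≤ lphi s := by
    unfold lphi
    have : (1:ℝ) ≤ 1 + Real.exp s := by nlinarith [Real.exp_pos s]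
    simpa using Real.log_nonneg this
  have hphi1 : lphi s ≤ |s| + 1 := by
    unfold lphi
    have h2 : 1 + Real.exp s ≤ 2 * Real.exp |s| := by
      have h3 : Real.exp s ≤ Real.exp |s| := Real.exp_le_exp.2 (le_abs_self s)
      have h4 : (1:ℝ) ≤ Real.exp |s| := Real.one_le_exp (abs_nonneg s)
      nlinarith
    calc Real.log (1 + Real.exp s) ≤ Real.log (2 * Real.exp |s|) :=
          Real.log_le_log (by positivity) h2
      _ = Real.log 2 + |s| := by rw [Real.log_mul (by norm_num) (Real.exp_ne_zero _), Real.log_exp]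
      _ ≤ |s| + 1 := by have := Real.log_two_lt_d9; linarith
  have hys : |(-y) * s| ≤ |s| := by
    rw [abs_mul, abs_neg]
    have : |y| ≤ 1 := abs_le.2 ⟨by linarith [hy.1], hy.2⟩
    nlinarith [abs_nonneg s]
  calc |ell y s| ≤ |(-y) * s| + |lphi s| := abs_add_le _ _
    _ ≤ |s| + (|s| + 1) := add_le_add hys (by rwa [abs_of_nonneg hphi0])
    _ = 2 * |s| + 1 := by ring

end LccAux

/-! ### Structure of the joint law -/

namespace LccAux

lemma logisticLoss_eq (θ : Evec d) (xy : Evec d × ℝ) :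
    logisticLoss θ xy = ell xy.2 ⟪θ, xy.1⟫ := rfl

lemma continuous_inner_fst (v : Evec d) : Continuous (fun xy : Evec d × ℝ => ⟪v, xy.1⟫) :=
  continuous_const.inner continuous_fst

lemma continuous_logisticLoss (θ : Evec d) : Continuous (logisticLoss θ) := by
  have : logisticLoss θ = fun xy : Evec d × ℝ => ell xy.2 ⟪θ, xy.1⟫ := rfl
  rw [this]
  exact continuous_ell.comp (continuous_snd.prodMk (continuous_inner_fst θ))

lemma continuous_accProb (lam : Evec d) : Continuous (accProb lam) := by
  unfold accProb
  exact (continuous_snd.sub (continuous_sigm.comp (continuous_inner_fst lam))).abs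

lemma accProb_nonneg (lam : Evec d) (xy : Evec d × ℝ) : 0 ≤ accProb lam xy := abs_nonneg _

lemma accProb_le_one (lam : Evec d) {xy : Evec d × ℝ} (hy : xy.2 = 0 ∨ xy.2 = 1) :
    accProb lam xy ≤ 1 := by
  unfold accProb
  rcases hy with h | h <;> rw [h, abs_le] <;>
    constructor <;> nlinarith [sigm_pos ⟪lam, xy.1⟫, sigm_lt_one ⟪lam, xy.1⟫]

lemma accProb_pos (lam : Evec d) {xy : Evec d × ℝ} (hy : xy.2 = 0 ∨ xy.2 = 1) :
    0 < accProb lam xy := by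
  unfold accProb
  rcases hy with h | h <;> rw [h, abs_pos] <;>
    nlinarith [sigm_pos ⟪lam, xy.1⟫, sigm_lt_one ⟪lam, xy.1⟫]

lemma accProb_one (lam : Evec d) (x : Evec d) :
    accProb lam (x, (1:ℝ)) = 1 - sigm ⟪lam, x⟫ := by
  show |(1:ℝ) - sigm ⟪lam, x⟫| = 1 - sigm ⟪lam, x⟫
  exact abs_of_nonneg (by nlinarith [sigm_lt_one (⟪lam, x⟫ : ℝ)])

lemma accProb_zero' (lam : Evec d) (x : Evec d) :
    accProb lam (x, (0:ℝ)) = sigm ⟪lam, x⟫ := by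
  show |(0:ℝ) - sigm ⟪lam, x⟫| = sigm ⟪lam, x⟫
  rw [abs_of_nonpos (by nlinarith [sigm_pos (⟪lam, x⟫ : ℝ)])]
  ring

/-- Part of the joint law living on `y = 1`. -/
def jl1 (ν : Measure (Evec d)) (pf : Evec d → ℝ) : Measure (Evec d × ℝ) :=
  (ν.withDensity fun x => ENNReal.ofReal (pf x)).map (fun x => (x, (1:ℝ)))

/-- Part of the joint law living on `y = 0`. -/
def jl0 (ν : Measure (Evec d)) (pf : Evec d → ℝ) : Measure (Evec d × ℝ) :=
  (ν.withDensity fun x => ENNReal.ofReal (1 - pf x)).map (fun x => (x, (0:ℝ)))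

lemma emb_meas (c : ℝ) : Measurable (fun x : Evec d => (x, c)) :=
  measurable_id.prodMk measurable_const

lemma jointLaw_eq (ν : Measure (Evec d)) (pf : Evec d → ℝ) (hpf_meas : Measurable pf) :
    jointLaw ν pf = jl1 ν pf + jl0 ν pf := by
  have hker : Measurable (fun x : Evec d =>
      ENNReal.ofReal (pf x) • Measure.dirac (x, (1 : ℝ)) +
      ENNReal.ofReal (1 - pf x) • Measure.dirac (x, (0 : ℝ))) := by
    refine Measure.measurable_of_measurable_coe _ fun s hs => ?_
    simp only [Measure.add_apply, Measure.smul_apply, smul_eq_mul,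
      Measure.dirac_apply' _ hs]
    refine Measurable.add (Measurable.mul ?_ ?_) (Measurable.mul ?_ ?_)
    · exact ENNReal.measurable_ofReal.comp hpf_meas
    · exact (measurable_one.indicator hs).comp (emb_meas (1:ℝ))
    · exact ENNReal.measurable_ofReal.comp (measurable_const.sub hpf_meas)
    · exact (measurable_one.indicator hs).comp (emb_meas (0:ℝ))
  ext s hs
  rw [jointLaw, Measure.bind_apply hs hker.aemeasurable]
  simp only [Measure.add_apply, Measure.smul_apply, smul_eq_mul, Measure.dirac_apply' _ hs]
  rw [lintegral_add_left]
  · show _ = jl1 ν pf s + jl0 ν pf s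
    simp only [jl1, jl0]
    rw [Measure.map_apply (emb_meas (1:ℝ)) hs, Measure.map_apply (emb_meas (0:ℝ)) hs,
      withDensity_apply _ ((emb_meas (1:ℝ)) hs), withDensity_apply _ ((emb_meas (0:ℝ)) hs),
      ← lintegral_indicator ((emb_meas (1:ℝ)) hs), ← lintegral_indicator ((emb_meas (0:ℝ)) hs)]
    congr 1 <;> apply lintegral_congr <;> intro x <;>
      by_cases hmem : (x, (1:ℝ)) ∈ s <;> by_cases hmem0 : (x, (0:ℝ)) ∈ s <;>
      simp [Set.indicator_apply, Set.mem_preimage, hmem, hmem0]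
  · exact ((ENNReal.measurable_ofReal.comp hpf_meas).mul
      ((measurable_one.indicator hs).comp (emb_meas (1:ℝ))))

section JL2
variable (ν : Measure (Evec d)) [IsProbabilityMeasure ν] {pf : Evec d → ℝ}
  (hpf_meas : Measurable pf) (hpf : ∀ x, pf x ∈ Set.Icc (0:ℝ) 1)

include hpf_meas hpf

lemma jointLaw_isProb : IsProbabilityMeasure (jointLaw ν pf) := by
  constructor
  rw [jointLaw_eq ν pf hpf_meas]
  simp only [Measure.coe_add, Pi.add_apply, jl1, jl0,
    Measure.map_apply (emb_meas (1:ℝ)) MeasurableSet.univ,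
    Measure.map_apply (emb_meas (0:ℝ)) MeasurableSet.univ, Set.preimage_univ,
    withDensity_apply _ MeasurableSet.univ, Measure.restrict_univ]
  rw [← lintegral_add_left (hpf_meas.ennreal_ofReal)]
  have : ∀ x, ENNReal.ofReal (pf x) + ENNReal.ofReal (1 - pf x) = 1 := by
    intro x
    rw [← ENNReal.ofReal_add (hpf x).1 (by linarith [(hpf x).2])]
    norm_num
  simp only [this, lintegral_one, measure_univ]

omit hpf in
lemma jointLaw_ae_y : ∀ᵐ xy ∂(jointLaw ν pf), xy.2 = 0 ∨ xy.2 = 1 := by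
  have hS : MeasurableSet {xy : Evec d × ℝ | ¬ (xy.2 = 0 ∨ xy.2 = 1)} := by
    apply MeasurableSet.compl
    exact (measurable_snd (MeasurableSet.singleton (0:ℝ))).union
      (measurable_snd (MeasurableSet.singleton (1:ℝ)))
  rw [ae_iff]
  rw [jointLaw_eq ν pf hpf_meas]
  simp only [Measure.coe_add, Pi.add_apply, jl1, jl0,
    Measure.map_apply (emb_meas (1:ℝ)) hS, Measure.map_apply (emb_meas (0:ℝ)) hS]
  have h1 : (fun x : Evec d => (x, (1:ℝ))) ⁻¹' {xy : Evec d × ℝ | ¬ (xy.2 = 0 ∨ xy.2 = 1)} = ∅ := by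
    ext x; simp
  have h0 : (fun x : Evec d => (x, (0:ℝ))) ⁻¹' {xy : Evec d × ℝ | ¬ (xy.2 = 0 ∨ xy.2 = 1)} = ∅ := by
    ext x; simp
  rw [h1, h0]
  simp

lemma integral_jointLaw (g : Evec d × ℝ → ℝ) (hgi : Integrable g (jointLaw ν pf)) :
    ∫ xy, g xy ∂(jointLaw ν pf)
      = ∫ x, pf x * g (x, 1) ∂ν + ∫ x, (1 - pf x) * g (x, 0) ∂ν := by
  rw [jointLaw_eq ν pf hpf_meas] at hgi ⊢
  obtain ⟨h1, h0⟩ := integrable_add_measure.mp hgi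
  rw [integral_add_measure h1 h0]
  have e1 : ∫ xy, g xy ∂(jl1 ν pf) = ∫ x, pf x * g (x, 1) ∂ν := by
    rw [jl1, integral_map (emb_meas (1:ℝ)).aemeasurable]
    · have hd : (fun x : Evec d => ENNReal.ofReal (pf x))
          = fun x => (((pf x).toNNReal : ℝ≥0) : ℝ≥0∞) := by
        funext x; rfl
      rw [hd, integral_withDensity_eq_integral_smul hpf_meas.real_toNNReal]
      apply integral_congr_ae
      filter_upwards with x
      have hc : ((pf x).toNNReal : ℝ) = pf x := Real.coe_toNNReal _ (hpf x).1
      rw [NNReal.smul_def, smul_eq_mul, hc]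
    · rw [← jl1]; exact h1.aestronglyMeasurable
  have e0 : ∫ xy, g xy ∂(jl0 ν pf) = ∫ x, (1 - pf x) * g (x, 0) ∂ν := by
    rw [jl0, integral_map (emb_meas (0:ℝ)).aemeasurable]
    · have hd : (fun x : Evec d => ENNReal.ofReal (1 - pf x))
          = fun x => (((1 - pf x).toNNReal : ℝ≥0) : ℝ≥0∞) := by
        funext x; rfl
      rw [hd, integral_withDensity_eq_integral_smul (show Measurable fun x => (1 - pf x).toNNReal from (measurable_const.sub hpf_meas).real_toNNReal)]
      apply integral_congr_ae
      filter_upwards with x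
      have hc : (((1 - pf x).toNNReal : ℝ≥0) : ℝ) = 1 - pf x :=
        Real.coe_toNNReal _ (by linarith [(hpf x).2])
      rw [NNReal.smul_def, smul_eq_mul, hc]
    · rw [← jl0]; exact h0.aestronglyMeasurable
  rw [e1, e0]

end JL2

end LccAux

namespace LccAux

lemma div_bound {A a L nx C : ℝ} (hA : 0 < A) (hC : 0 ≤ C) (ha0 : 0 ≤ a) (ha1 : a ≤ 1)
    (hL : |L| ≤ C * nx + C) (hnx : 0 ≤ nx) :
    |a / A * L| ≤ (C/A + 1) * nx + (C/A + 1) := by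
  have hb2 : a / A ≤ 1/A := by gcongr
  have h1 : |a / A * L| = a/A * |L| := by
    rw [abs_mul, abs_of_nonneg (div_nonneg ha0 hA.le)]
  have h2 : a/A * |L| ≤ (1/A) * (C * nx + C) :=
    mul_le_mul hb2 hL (abs_nonneg _) (by positivity)
  have h3 : (1/A) * (C * nx + C) = (C/A) * nx + C/A := by ring
  have h4 : 0 ≤ C/A := div_nonneg hC hA.le
  nlinarith

end LccAux

set_option maxHeartbeats 1000000

/-- **Proposition 1.** Assume `E‖X‖ < ∞`, nonseparability and nondegeneracy,
and let `θ*` be the population risk minimizer (best linear predictor) for `P`. Then `θ*`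
is the unique minimizer of `Q_{θ*}`, i.e. `θ* = argmin_θ Q_{θ*}(θ) = θ̄(θ*)`. -/
theorem lcc_pilot_at_thetaStar_fixed_point {d : ℕ}
    (ν : Measure (Evec d)) [IsProbabilityMeasure ν]
    (pf : Evec d → ℝ) (hpf_meas : Measurable pf) (hpf : ∀ x, pf x ∈ Set.Icc (0 : ℝ) 1)
    (hX : Integrable (fun xy : Evec d × ℝ => ‖xy.1‖) (jointLaw ν pf))
    (hnd : NonDegen (jointLaw ν pf)) (hns : NonSep (jointLaw ν pf))
    (θstar : Evec d)
    (hθstar : ∀ θ : Evec d,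
      ∫ xy, logisticLoss θstar xy ∂(jointLaw ν pf) ≤ ∫ xy, logisticLoss θ xy ∂(jointLaw ν pf)) :
    (∀ θ : Evec d, Qpop (jointLaw ν pf) θstar θstar ≤ Qpop (jointLaw ν pf) θstar θ) ∧
    ∀ θm : Evec d, (∀ θ : Evec d, Qpop (jointLaw ν pf) θstar θm ≤ Qpop (jointLaw ν pf) θstar θ) →
      θm = θstar := by
  classical
  set μ := jointLaw ν pf with hμdef
  haveI hP : IsProbabilityMeasure μ := LccAux.jointLaw_isProb ν hpf_meas hpf
  have haey : ∀ᵐ xy ∂μ, xy.2 = 0 ∨ xy.2 = 1 := LccAux.jointLaw_ae_y ν hpf_meas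
  -- generic integrability from linear growth
  have hint : ∀ (g : Evec d × ℝ → ℝ), AEStronglyMeasurable g μ → ∀ C : ℝ,
      (∀ᵐ xy ∂μ, |g xy| ≤ C * ‖xy.1‖ + C) → Integrable g μ := by
    intro g hg C hb
    refine ((hX.const_mul C).add (integrable_const C)).mono' hg ?_
    filter_upwards [hb] with xy hxy
    simpa [Real.norm_eq_abs] using hxy
  -- integrability of the logistic loss
  have hloss_int : ∀ θ : Evec d, Integrable (logisticLoss θ) μ := by
    intro θ
    refine hint _ (LccAux.continuous_logisticLoss θ).aestronglyMeasurable (2*‖θ‖+1) ?_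
    filter_upwards [haey] with xy hy
    have h1 : |logisticLoss θ xy| ≤ 2 * |⟪θ, xy.1⟫| + 1 := by
      rw [LccAux.logisticLoss_eq]
      apply LccAux.ell_abs_le
      rcases hy with hc|hc <;> rw [hc] <;> norm_num
    have h2 : |⟪θ, xy.1⟫| ≤ ‖θ‖ * ‖xy.1‖ := abs_real_inner_le_norm _ _
    nlinarith [norm_nonneg xy.1, norm_nonneg θ, abs_nonneg (⟪θ, xy.1⟫ : ℝ)]
  -- the first-order condition at θ*
  have grad0 : ∀ v : Evec d, ∫ xy, (sigm ⟪θstar, xy.1⟫ - xy.2) * ⟪v, xy.1⟫ ∂μ = 0 := by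
    have key : ∀ v : Evec d, 0 ≤ ∫ xy, (sigm ⟪θstar, xy.1⟫ - xy.2) * ⟪v, xy.1⟫ ∂μ := by
      intro v
      have hbd_int : Integrable (fun xy : Evec d × ℝ => |⟪v, xy.1⟫|) μ := by
        refine hint _ ((LccAux.continuous_inner_fst v).abs.aestronglyMeasurable) (‖v‖+1) ?_
        filter_upwards with xy
        have h2 : |⟪v, xy.1⟫| ≤ ‖v‖ * ‖xy.1‖ := abs_real_inner_le_norm _ _
        rw [abs_abs]
        nlinarith [norm_nonneg xy.1, norm_nonneg v]
      have hconv : Tendsto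
          (fun t : ℝ => ∫ xy, (logisticLoss (θstar + t • v) xy - logisticLoss θstar xy) / t ∂μ)
          (𝓝[>] (0:ℝ))
          (𝓝 (∫ xy, (sigm ⟪θstar, xy.1⟫ - xy.2) * ⟪v, xy.1⟫ ∂μ)) := by
        apply tendsto_integral_filter_of_dominated_convergence
            (fun xy : Evec d × ℝ => |⟪v, xy.1⟫|)
        · filter_upwards with t
          exact (((LccAux.continuous_logisticLoss _).sub
            (LccAux.continuous_logisticLoss _)).div_const t).aestronglyMeasurable
        · filter_upwards [self_mem_nhdsWithin] with t ht
          filter_upwards [haey] with xy hy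
          have hyIcc : xy.2 ∈ Set.Icc (0:ℝ) 1 := by
            rcases hy with hc|hc <;> rw [hc] <;> norm_num
          have hi : (⟪θstar + t • v, xy.1⟫ : ℝ) = ⟪θstar, xy.1⟫ + t * ⟪v, xy.1⟫ := by
            rw [inner_add_left, real_inner_smul_left]
          have hlip := LccAux.ell_lipschitz hyIcc ⟪θstar, xy.1⟫ (⟪θstar, xy.1⟫ + t * ⟪v, xy.1⟫)
          simp only [add_sub_cancel_left] at hlip
          simp only [LccAux.logisticLoss_eq, hi]
          rw [Real.norm_eq_abs, abs_div,
            div_le_iff₀ (abs_pos.mpr (ne_of_gt (Set.mem_Ioi.mp ht)))]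
          calc |LccAux.ell xy.2 (⟪θstar, xy.1⟫ + t * ⟪v, xy.1⟫) - LccAux.ell xy.2 ⟪θstar, xy.1⟫|
              ≤ |t * ⟪v, xy.1⟫| := hlip
            _ = |⟪v, xy.1⟫| * |t| := by rw [abs_mul]; ring
        · exact hbd_int
        · filter_upwards with xy
          have haff : HasDerivAt (fun t : ℝ => (⟪θstar, xy.1⟫ : ℝ) + t * ⟪v, xy.1⟫)
              (⟪v, xy.1⟫ : ℝ) 0 := by
            simpa using ((hasDerivAt_id (0:ℝ)).mul_const (⟪v, xy.1⟫ : ℝ)).const_add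
              (⟪θstar, xy.1⟫ : ℝ)
          have hg : HasDerivAt
              (fun t : ℝ => LccAux.ell xy.2 ((⟪θstar, xy.1⟫ : ℝ) + t * ⟪v, xy.1⟫))
              ((sigm ⟪θstar, xy.1⟫ - xy.2) * ⟪v, xy.1⟫) 0 := by
            have hc := (LccAux.hasDerivAt_ell xy.2
              ((⟪θstar, xy.1⟫ : ℝ) + 0 * ⟪v, xy.1⟫)).comp 0 haff
            simpa [Function.comp_def] using hc
          have hslope := hasDerivAt_iff_tendsto_slope.mp hg
          have hmono : 𝓝[>] (0:ℝ) ≤ 𝓝[≠] (0:ℝ) :=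
            nhdsWithin_mono 0 (fun t ht => ne_of_gt ht)
          refine (hslope.mono_left hmono).congr' ?_
          filter_upwards [self_mem_nhdsWithin] with t ht
          have hi : (⟪θstar + t • v, xy.1⟫ : ℝ) = ⟪θstar, xy.1⟫ + t * ⟪v, xy.1⟫ := by
            rw [inner_add_left, real_inner_smul_left]
          rw [slope_def_field]
          simp only [LccAux.logisticLoss_eq, hi, sub_zero, zero_mul, add_zero]
      have hnonneg : ∀ᶠ t in 𝓝[>] (0:ℝ),
          0 ≤ ∫ xy, (logisticLoss (θstar + t • v) xy - logisticLoss θstar xy) / t ∂μ := by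
        filter_upwards [self_mem_nhdsWithin] with t ht
        rw [integral_div, integral_sub (hloss_int _) (hloss_int _)]
        exact div_nonneg (sub_nonneg.2 (hθstar (θstar + t • v))) (le_of_lt ht)
      exact ge_of_tendsto hconv hnonneg
    intro v
    have h1 := key v
    have h2 := key (-v)
    have hneg : ∫ xy, (sigm ⟪θstar, xy.1⟫ - xy.2) * ⟪-v, xy.1⟫ ∂μ
        = - ∫ xy, (sigm ⟪θstar, xy.1⟫ - xy.2) * ⟪v, xy.1⟫ ∂μ := by
      rw [← integral_neg]
      apply integral_congr_ae
      filter_upwards with xy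
      rw [inner_neg_left, mul_neg]
    rw [hneg] at h2
    linarith
  -- positivity of the marginal acceptance probability
  have hacc_int : Integrable (accProb θstar) μ := by
    refine hint _ (LccAux.continuous_accProb θstar).aestronglyMeasurable 1 ?_
    filter_upwards [haey] with xy hy
    rw [abs_of_nonneg (LccAux.accProb_nonneg _ _)]
    have := LccAux.accProb_le_one θstar hy
    nlinarith [norm_nonneg xy.1]
  have habar_pos : 0 < aBar μ θstar := by
    rw [aBar]
    rcases eq_or_lt_of_le
        (integral_nonneg (fun xy => LccAux.accProb_nonneg θstar xy) :
          0 ≤ ∫ xy, accProb θstar xy ∂μ) with hc | hc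
    · exfalso
      have h0 : (fun xy => accProb θstar xy) =ᵐ[μ] 0 :=
        (integral_eq_zero_iff_of_nonneg (fun xy => LccAux.accProb_nonneg θstar xy)
          hacc_int).mp hc.symm
      have hFalse : ∀ᵐ xy ∂μ, False := by
        filter_upwards [h0, haey] with xy h0' hy
        exact absurd h0' (ne_of_gt (LccAux.accProb_pos θstar hy))
      have h2 := ae_iff.mp hFalse
      simp at h2
    · exact hc
  set A := aBar μ θstar with hAdef
  -- representation of the tilted risk
  have hQrep : ∀ w : Evec d, Rpop μ θstar w =
      ∫ xy, (accProb θstar xy / A) * logisticLoss w xy ∂μ := by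
    intro w
    rw [Rpop, tiltedLaw]
    have hd : (fun xy : Evec d × ℝ => ENNReal.ofReal (accProb θstar xy / aBar μ θstar))
        = fun xy => (((accProb θstar xy / A).toNNReal : ℝ≥0) : ℝ≥0∞) := rfl
    rw [hd, integral_withDensity_eq_integral_smul
      (((LccAux.continuous_accProb θstar).measurable.div_const _).real_toNNReal)]
    apply integral_congr_ae
    filter_upwards with xy
    rw [NNReal.smul_def, smul_eq_mul,
      Real.coe_toNNReal _ (div_nonneg (LccAux.accProb_nonneg _ _) habar_pos.le)]
  -- integrability of tilted integrands
  have hQint : ∀ w : Evec d,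
      Integrable (fun xy => (accProb θstar xy / A) * logisticLoss w xy) μ := by
    intro w
    refine hint _ (((LccAux.continuous_accProb θstar).div_const _).mul
      (LccAux.continuous_logisticLoss w)).aestronglyMeasurable ((2*‖w‖+1)/A + 1) ?_
    filter_upwards [haey] with xy hy
    refine LccAux.div_bound habar_pos (by positivity) (LccAux.accProb_nonneg _ _)
      (LccAux.accProb_le_one _ hy) ?_ (norm_nonneg _)
    have h1 : |logisticLoss w xy| ≤ 2 * |⟪w, xy.1⟫| + 1 := by
      rw [LccAux.logisticLoss_eq]
      apply LccAux.ell_abs_le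
      rcases hy with hc|hc <;> rw [hc] <;> norm_num
    have h2 : |⟪w, xy.1⟫| ≤ ‖w‖ * ‖xy.1‖ := abs_real_inner_le_norm _ _
    nlinarith [norm_nonneg xy.1, norm_nonneg w]
  -- the key half identity
  have hkey : ∀ v : Evec d,
      ∫ xy, accProb θstar xy * ((1/2 - xy.2) * ⟪v, xy.1⟫) ∂μ = 0 := by
    intro v
    have hmeas1 : Continuous (fun xy : Evec d × ℝ =>
        accProb θstar xy * ((1/2 - xy.2) * ⟪v, xy.1⟫)) :=
      (LccAux.continuous_accProb θstar).mul
        ((continuous_const.sub continuous_snd).mul (LccAux.continuous_inner_fst v))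
    have hint1 : Integrable (fun xy => accProb θstar xy * ((1/2 - xy.2) * ⟪v, xy.1⟫)) μ := by
      refine hint _ hmeas1.aestronglyMeasurable (2*‖v‖+2) ?_
      filter_upwards [haey] with xy hy
      have h2 : |⟪v, xy.1⟫| ≤ ‖v‖ * ‖xy.1‖ := abs_real_inner_le_norm _ _
      have h3 : |1/2 - xy.2| ≤ 1 := by rcases hy with hc|hc <;> rw [hc, abs_le] <;> constructor <;> norm_num
      have h4 : 0 ≤ accProb θstar xy := LccAux.accProb_nonneg _ _
      have h5 : accProb θstar xy ≤ 1 := LccAux.accProb_le_one _ hy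
      rw [abs_mul, abs_mul, abs_of_nonneg h4]
      have k1 : |1/2 - xy.2| * |⟪v, xy.1⟫| ≤ |⟪v, xy.1⟫| :=
        mul_le_of_le_one_left (abs_nonneg _) h3
      have k2 : accProb θstar xy * (|1/2 - xy.2| * |⟪v, xy.1⟫|) ≤ |1/2 - xy.2| * |⟪v, xy.1⟫| :=
        mul_le_of_le_one_left (mul_nonneg (abs_nonneg _) (abs_nonneg _)) h5
      nlinarith [norm_nonneg xy.1, norm_nonneg v, abs_nonneg (⟪v, xy.1⟫ : ℝ)]
    have hmeas2 : Continuous (fun xy : Evec d × ℝ =>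
        (sigm ⟪θstar, xy.1⟫ - xy.2) * ⟪v, xy.1⟫) :=
      ((LccAux.continuous_sigm.comp (LccAux.continuous_inner_fst θstar)).sub
        continuous_snd).mul (LccAux.continuous_inner_fst v)
    have hint2 : Integrable (fun xy => (sigm ⟪θstar, xy.1⟫ - xy.2) * ⟪v, xy.1⟫) μ := by
      refine hint _ hmeas2.aestronglyMeasurable (2*‖v‖+2) ?_
      filter_upwards [haey] with xy hy
      have h2 : |⟪v, xy.1⟫| ≤ ‖v‖ * ‖xy.1‖ := abs_real_inner_le_norm _ _
      have h3 : |sigm ⟪θstar, xy.1⟫ - xy.2| ≤ 2 := by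
        rcases hy with hc|hc <;> rw [hc] <;> rw [abs_le] <;> constructor <;>
          nlinarith [LccAux.sigm_pos (⟪θstar, xy.1⟫ : ℝ), LccAux.sigm_lt_one (⟪θstar, xy.1⟫ : ℝ)]
      rw [abs_mul]
      nlinarith [norm_nonneg xy.1, norm_nonneg v, abs_nonneg (⟪v, xy.1⟫ : ℝ),
        abs_nonneg (sigm ⟪θstar, xy.1⟫ - xy.2)]
    have e1 := LccAux.integral_jointLaw ν hpf_meas hpf _ hint1
    have e2 := LccAux.integral_jointLaw ν hpf_meas hpf _ hint2
    rw [grad0 v] at e2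
    rw [e1]
    have t1 : (fun x : Evec d => pf x * (accProb θstar (x,1) * ((1/2 - (1:ℝ)) * ⟪v, x⟫)))
        = fun x : Evec d => (1/2 : ℝ) • (pf x * ((sigm ⟪θstar, x⟫ - 1) * ⟪v, x⟫)) := by
      funext x
      rw [LccAux.accProb_one, smul_eq_mul]
      ring
    have t0 : (fun x : Evec d => (1 - pf x) * (accProb θstar (x,0) * ((1/2 - (0:ℝ)) * ⟪v, x⟫)))
        = fun x : Evec d => (1/2 : ℝ) • ((1 - pf x) * ((sigm ⟪θstar, x⟫ - 0) * ⟪v, x⟫)) := by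
      funext x
      rw [LccAux.accProb_zero', smul_eq_mul]
      ring
    rw [t1, t0, integral_smul, integral_smul, smul_eq_mul, smul_eq_mul, ← mul_add, ← e2]
    ring
  -- minimality of θ* for the tilted problem
  have hmin : ∀ θ : Evec d, Qpop μ θstar θstar ≤ Qpop μ θstar θ := by
    intro θ
    rw [Qpop, Qpop, sub_self, hQrep, hQrep]
    have hlin_meas : Continuous (fun xy : Evec d × ℝ =>
        (accProb θstar xy / A) * ((1/2 - xy.2) * ⟪θ - θstar, xy.1⟫)) :=
      ((LccAux.continuous_accProb θstar).div_const _).mul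
        ((continuous_const.sub continuous_snd).mul (LccAux.continuous_inner_fst _))
    have hlin_int : Integrable (fun xy =>
        (accProb θstar xy / A) * ((1/2 - xy.2) * ⟪θ - θstar, xy.1⟫)) μ := by
      refine hint _ hlin_meas.aestronglyMeasurable ((2*‖θ - θstar‖+2)/A + 1) ?_
      filter_upwards [haey] with xy hy
      refine LccAux.div_bound habar_pos (by positivity) (LccAux.accProb_nonneg _ _)
        (LccAux.accProb_le_one _ hy) ?_ (norm_nonneg _)
      have h2 : |⟪θ - θstar, xy.1⟫| ≤ ‖θ - θstar‖ * ‖xy.1‖ := abs_real_inner_le_norm _ _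
      have h3 : |1/2 - xy.2| ≤ 1 := by rcases hy with hc|hc <;> rw [hc, abs_le] <;> constructor <;> norm_num
      rw [abs_mul]
      nlinarith [norm_nonneg xy.1, norm_nonneg (θ - θstar), abs_nonneg (⟪θ - θstar, xy.1⟫ : ℝ),
        abs_nonneg (1/2 - xy.2)]
    have step2 : ∫ xy, (accProb θstar xy / A) * ((1/2 - xy.2) * ⟪θ - θstar, xy.1⟫) ∂μ = 0 := by
      have hre : (fun xy : Evec d × ℝ =>
          (accProb θstar xy / A) * ((1/2 - xy.2) * ⟪θ - θstar, xy.1⟫))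
          = fun xy => (1/A : ℝ) • (accProb θstar xy * ((1/2 - xy.2) * ⟪θ - θstar, xy.1⟫)) := by
        funext xy
        rw [smul_eq_mul]
        ring
      rw [hre, integral_smul, hkey (θ - θstar), smul_zero]
    have step1 : ∫ xy, (accProb θstar xy / A) * logisticLoss 0 xy ∂μ
        + ∫ xy, (accProb θstar xy / A) * ((1/2 - xy.2) * ⟪θ - θstar, xy.1⟫) ∂μ
        ≤ ∫ xy, (accProb θstar xy / A) * logisticLoss (θ - θstar) xy ∂μ := by
      rw [← integral_add (hQint 0) hlin_int]
      apply integral_mono ((hQint 0).add hlin_int) (hQint (θ - θstar))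
      intro xy
      have htan := LccAux.ell_tangent_zero xy.2 (⟪θ - θstar, xy.1⟫ : ℝ)
      have hnn : 0 ≤ accProb θstar xy / A :=
        div_nonneg (LccAux.accProb_nonneg _ _) habar_pos.le
      simp only [LccAux.logisticLoss_eq, inner_zero_left, Pi.add_apply]
      nlinarith [mul_le_mul_of_nonneg_left htan hnn]
    rw [step2, add_zero] at step1
    exact step1
  refine ⟨hmin, ?_⟩
  -- uniqueness
  intro θm hm
  by_contra hne
  have hv : θm - θstar ≠ 0 := sub_ne_zero.mpr hne
  have heq : Qpop μ θstar θm = Qpop μ θstar θstar := le_antisymm (hm θstar) (hmin θm)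
  set v : Evec d := θm - θstar with hvdef
  set h : Evec d × ℝ → ℝ := fun xy => accProb θstar xy *
    (LccAux.ell xy.2 ⟪v, xy.1⟫ - LccAux.ell xy.2 0 - (1/2 - xy.2) * ⟪v, xy.1⟫) with hdef
  have hh_nonneg : ∀ xy, 0 ≤ h xy := by
    intro xy
    apply mul_nonneg (LccAux.accProb_nonneg _ _)
    have := LccAux.ell_tangent_zero xy.2 (⟪v, xy.1⟫ : ℝ)
    linarith
  have hh_cont : Continuous h := by
    apply (LccAux.continuous_accProb θstar).mul
    apply Continuous.sub
    · apply Continuous.sub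
      · exact LccAux.continuous_ell.comp (continuous_snd.prodMk (LccAux.continuous_inner_fst v))
      · exact LccAux.continuous_ell.comp (continuous_snd.prodMk continuous_const)
    · exact (continuous_const.sub continuous_snd).mul (LccAux.continuous_inner_fst v)
  have hh_int : Integrable h μ := by
    refine hint _ hh_cont.aestronglyMeasurable (3*‖v‖+3) ?_
    filter_upwards [haey] with xy hy
    have hyIcc : xy.2 ∈ Set.Icc (0:ℝ) 1 := by rcases hy with hc|hc <;> rw [hc] <;> norm_num
    have h2 : |⟪v, xy.1⟫| ≤ ‖v‖ * ‖xy.1‖ := abs_real_inner_le_norm _ _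
    have hb1 : |LccAux.ell xy.2 ⟪v, xy.1⟫| ≤ 2 * |⟪v, xy.1⟫| + 1 := LccAux.ell_abs_le hyIcc _
    have hb2 : |LccAux.ell xy.2 0| ≤ 1 := by
      have := LccAux.ell_abs_le hyIcc 0
      simpa using this
    have hb3 : |(1/2 - xy.2) * ⟪v, xy.1⟫| ≤ |⟪v, xy.1⟫| := by
      rw [abs_mul]
      have h3 : |1/2 - xy.2| ≤ 1 := by rcases hy with hc|hc <;> rw [hc, abs_le] <;> constructor <;> norm_num
      nlinarith [abs_nonneg (⟪v, xy.1⟫ : ℝ)]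
    have h4 : 0 ≤ accProb θstar xy := LccAux.accProb_nonneg _ _
    have h5 : accProb θstar xy ≤ 1 := LccAux.accProb_le_one _ hy
    have hsum : |LccAux.ell xy.2 ⟪v, xy.1⟫ - LccAux.ell xy.2 0 - (1/2 - xy.2) * ⟪v, xy.1⟫|
        ≤ 3 * |⟪v, xy.1⟫| + 2 := by
      calc |LccAux.ell xy.2 ⟪v, xy.1⟫ - LccAux.ell xy.2 0 - (1/2 - xy.2) * ⟪v, xy.1⟫|
          ≤ |LccAux.ell xy.2 ⟪v, xy.1⟫ - LccAux.ell xy.2 0| + |(1/2 - xy.2) * ⟪v, xy.1⟫| :=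
            abs_sub _ _
        _ ≤ (|LccAux.ell xy.2 ⟪v, xy.1⟫| + |LccAux.ell xy.2 0|) + |(1/2 - xy.2) * ⟪v, xy.1⟫| := by
            exact add_le_add (abs_sub _ _) le_rfl
        _ ≤ 3 * |⟪v, xy.1⟫| + 2 := by nlinarith
    rw [hdef, abs_mul, abs_of_nonneg h4]
    nlinarith [abs_nonneg (LccAux.ell xy.2 ⟪v, xy.1⟫ - LccAux.ell xy.2 0
      - (1/2 - xy.2) * ⟪v, xy.1⟫), norm_nonneg xy.1, norm_nonneg v]
  -- the integral of h vanishes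
  have i1 : Integrable (fun xy => accProb θstar xy * LccAux.ell xy.2 ⟪v, xy.1⟫) μ := by
    have hc : Continuous (fun xy : Evec d × ℝ => accProb θstar xy * LccAux.ell xy.2 ⟪v, xy.1⟫) :=
      (LccAux.continuous_accProb θstar).mul
        (LccAux.continuous_ell.comp (continuous_snd.prodMk (LccAux.continuous_inner_fst v)))
    refine hint _ hc.aestronglyMeasurable (2*‖v‖+1) ?_
    filter_upwards [haey] with xy hy
    have hyIcc : xy.2 ∈ Set.Icc (0:ℝ) 1 := by rcases hy with hc'|hc' <;> rw [hc'] <;> norm_num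
    have h2 : |⟪v, xy.1⟫| ≤ ‖v‖ * ‖xy.1‖ := abs_real_inner_le_norm _ _
    have hb1 : |LccAux.ell xy.2 ⟪v, xy.1⟫| ≤ 2 * |⟪v, xy.1⟫| + 1 := LccAux.ell_abs_le hyIcc _
    have h4 : 0 ≤ accProb θstar xy := LccAux.accProb_nonneg _ _
    have h5 : accProb θstar xy ≤ 1 := LccAux.accProb_le_one _ hy
    rw [abs_mul, abs_of_nonneg h4]
    nlinarith [abs_nonneg (LccAux.ell xy.2 ⟪v, xy.1⟫), norm_nonneg xy.1, norm_nonneg v]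
  have i2 : Integrable (fun xy => accProb θstar xy * LccAux.ell xy.2 0) μ := by
    have hc : Continuous (fun xy : Evec d × ℝ => accProb θstar xy * LccAux.ell xy.2 0) :=
      (LccAux.continuous_accProb θstar).mul
        (LccAux.continuous_ell.comp (continuous_snd.prodMk continuous_const))
    refine hint _ hc.aestronglyMeasurable 1 ?_
    filter_upwards [haey] with xy hy
    have hyIcc : xy.2 ∈ Set.Icc (0:ℝ) 1 := by rcases hy with hc'|hc' <;> rw [hc'] <;> norm_num
    have hb2 : |LccAux.ell xy.2 0| ≤ 1 := by simpa using LccAux.ell_abs_le hyIcc 0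
    have h4 : 0 ≤ accProb θstar xy := LccAux.accProb_nonneg _ _
    have h5 : accProb θstar xy ≤ 1 := LccAux.accProb_le_one _ hy
    rw [abs_mul, abs_of_nonneg h4]
    nlinarith [abs_nonneg (LccAux.ell xy.2 0), norm_nonneg xy.1]
  have i3 : Integrable (fun xy => accProb θstar xy * ((1/2 - xy.2) * ⟪v, xy.1⟫)) μ := by
    have hc : Continuous (fun xy : Evec d × ℝ =>
        accProb θstar xy * ((1/2 - xy.2) * ⟪v, xy.1⟫)) :=
      (LccAux.continuous_accProb θstar).mul
        ((continuous_const.sub continuous_snd).mul (LccAux.continuous_inner_fst v))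
    refine hint _ hc.aestronglyMeasurable (2*‖v‖+2) ?_
    filter_upwards [haey] with xy hy
    have h2 : |⟪v, xy.1⟫| ≤ ‖v‖ * ‖xy.1‖ := abs_real_inner_le_norm _ _
    have h3 : |1/2 - xy.2| ≤ 1 := by
      rcases hy with hc'|hc' <;> rw [hc', abs_le] <;> constructor <;> norm_num
    have h4 : 0 ≤ accProb θstar xy := LccAux.accProb_nonneg _ _
    have h5 : accProb θstar xy ≤ 1 := LccAux.accProb_le_one _ hy
    rw [abs_mul, abs_mul, abs_of_nonneg h4]
    have k1 : |1/2 - xy.2| * |⟪v, xy.1⟫| ≤ |⟪v, xy.1⟫| :=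
      mul_le_of_le_one_left (abs_nonneg _) h3
    have k2 : accProb θstar xy * (|1/2 - xy.2| * |⟪v, xy.1⟫|) ≤ |1/2 - xy.2| * |⟪v, xy.1⟫| :=
      mul_le_of_le_one_left (mul_nonneg (abs_nonneg _) (abs_nonneg _)) h5
    nlinarith [norm_nonneg xy.1, norm_nonneg v, abs_nonneg (⟪v, xy.1⟫ : ℝ)]
  have hA_int : ∀ w : Evec d, A * (∫ xy, (accProb θstar xy / A) * logisticLoss w xy ∂μ)
      = ∫ xy, accProb θstar xy * logisticLoss w xy ∂μ := by
    intro w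
    rw [← smul_eq_mul, ← integral_smul]
    apply integral_congr_ae
    filter_upwards with xy
    rw [smul_eq_mul]
    field_simp
  have hintegral : ∫ xy, h xy ∂μ = 0 := by
    have hsplit : ∫ xy, h xy ∂μ
        = (∫ xy, accProb θstar xy * LccAux.ell xy.2 ⟪v, xy.1⟫ ∂μ)
          - (∫ xy, accProb θstar xy * LccAux.ell xy.2 0 ∂μ)
          - ∫ xy, accProb θstar xy * ((1/2 - xy.2) * ⟪v, xy.1⟫) ∂μ := by
      have hfun : h = fun xy =>
          (accProb θstar xy * LccAux.ell xy.2 ⟪v, xy.1⟫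
            - accProb θstar xy * LccAux.ell xy.2 0)
          - accProb θstar xy * ((1/2 - xy.2) * ⟪v, xy.1⟫) := by
        funext xy
        simp only [hdef]
        ring
      have i12 : Integrable (fun xy : Evec d × ℝ =>
          accProb θstar xy * LccAux.ell xy.2 ⟪v, xy.1⟫
            - accProb θstar xy * LccAux.ell xy.2 0) μ := i1.sub i2
      rw [hfun, integral_sub i12 i3, integral_sub i1 i2]
    rw [hsplit, hkey v, sub_zero]
    have eq1 : ∫ xy, accProb θstar xy * logisticLoss (θm - θstar) xy ∂μ
        = A * Qpop μ θstar θm := by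
      rw [Qpop, hQrep, hA_int]
    have eq0 : ∫ xy, accProb θstar xy * logisticLoss (θstar - θstar) xy ∂μ
        = A * Qpop μ θstar θstar := by
      rw [Qpop, hQrep, hA_int]
    have hl1 : (fun xy : Evec d × ℝ => accProb θstar xy * LccAux.ell xy.2 ⟪v, xy.1⟫)
        = fun xy => accProb θstar xy * logisticLoss (θm - θstar) xy := by
      funext xy
      rw [LccAux.logisticLoss_eq]
    have hl0 : (fun xy : Evec d × ℝ => accProb θstar xy * LccAux.ell xy.2 0)
        = fun xy => accProb θstar xy * logisticLoss (θstar - θstar) xy := by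
      funext xy
      rw [LccAux.logisticLoss_eq, sub_self, inner_zero_left]
    rw [hl1, hl0, eq1, eq0, heq]
    ring
  have hh_ae0 : h =ᵐ[μ] 0 :=
    (integral_eq_zero_iff_of_nonneg hh_nonneg hh_int).mp hintegral
  have hz : ∀ᵐ xy ∂μ, (⟪v, xy.1⟫ : ℝ) = 0 := by
    filter_upwards [hh_ae0, haey] with xy h0 hy
    by_contra hbz
    have hstrict := LccAux.ell_tangent_zero_strict xy.2 hbz
    have hpos := LccAux.accProb_pos θstar hy
    have hposh : 0 < h xy := by
      rw [hdef]
      apply mul_pos hpos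
      linarith
    have : h xy = 0 := h0
    linarith
  have hzero : ∫ xy, |⟪v, xy.1⟫| ∂μ = 0 := by
    have : (fun xy : Evec d × ℝ => |⟪v, xy.1⟫|) =ᵐ[μ] 0 := by
      filter_upwards [hz] with xy hxy
      rw [hxy, abs_zero]
      rfl
    rw [integral_congr_ae this]
    simp
  exact hnd v hv hzero
end
end

section
/- Assume E‖X‖ < ∞ and let λ_n be a sequence of (possibly data-dependent) random pilot estimates with λ_n → λ_∞ in probability for some fixed λ_∞ ∈ ℝ^p. Then for each fixed θ ∈ ℝ^p, the empirical local case-control risk converges in probability: Q̂_{λ_n}(θ) → Q_{λ_∞}(θ). -/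
open MeasureTheory ProbabilityTheory Real Filter
open scoped ENNReal NNReal RealInnerProductSpace Topology BoundedContinuousFunction

noncomputable section

variable {d : ℕ}

/-- The (recentred) empirical local case-control risk
`Q̂_{λ_n}(θ) = -(n ā(λ_n))⁻¹ ∑_{i<n} z_i^{λ_n} [y_i (θ-λ_n)'x_i - log(1 + e^{(θ-λ_n)'x_i})]`,
where `z_i^λ = 1{u_i ≤ a_λ(x_i, y_i)}`. -/
def Qhat {Ω : Type*} (μ : Measure (Evec d × ℝ)) (X : ℕ → Ω → Evec d) (Y U : ℕ → Ω → ℝ)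
    (Lam : ℕ → Ω → Evec d) (n : ℕ) (θ : Evec d) (ω : Ω) : ℝ :=
  -((n : ℝ) * aBar μ (Lam n ω))⁻¹ * ∑ i ∈ Finset.range n,
    (if U i ω ≤ accProb (Lam n ω) (X i ω, Y i ω) then (1 : ℝ) else 0) *
      (Y i ω * ⟪θ - Lam n ω, X i ω⟫ - Real.log (1 + Real.exp ⟪θ - Lam n ω, X i ω⟫))


set_option linter.unusedSectionVars false
set_option linter.unusedVariables false
set_option maxHeartbeats 1000000

lemma one_add_exp_pos (t : ℝ) : 0 < 1 + Real.exp t := by positivity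

lemma sigm_pos (t : ℝ) : 0 < sigm t := div_pos (Real.exp_pos t) (one_add_exp_pos t)

lemma sigm_lt_one (t : ℝ) : sigm t < 1 := by
  rw [sigm, div_lt_one (one_add_exp_pos t)]; linarith

lemma sigm_mono {t s : ℝ} (h : t ≤ s) : sigm t ≤ sigm s := by
  have ht := Real.exp_pos t; have hs := Real.exp_pos s
  have : Real.exp t ≤ Real.exp s := Real.exp_le_exp.2 h
  rw [sigm, sigm, div_le_div_iff₀ (one_add_exp_pos t) (one_add_exp_pos s)]
  nlinarith

lemma sigm_sub_le {t s : ℝ} (h : t ≤ s) : sigm s - sigm t ≤ s - t := by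
  have ht := Real.exp_pos t; have hs := Real.exp_pos s
  have key : Real.exp s - Real.exp t ≤ (s - t) * Real.exp s := by
    have h1 : 1 - (s - t) ≤ Real.exp (t - s) := by
      have := Real.add_one_le_exp (t - s); linarith
    have h2 : Real.exp (t - s) * Real.exp s = Real.exp t := by
      rw [← Real.exp_add]; ring_nf
    nlinarith
  have hD : 0 < (1 + Real.exp t) * (1 + Real.exp s) := by positivity
  have expand : sigm s - sigm t
      = (Real.exp s - Real.exp t) / ((1 + Real.exp t) * (1 + Real.exp s)) := by
    rw [sigm, sigm]; field_simp; ring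
  rw [expand, div_le_iff₀ hD]
  have h0 : 0 ≤ s - t := by linarith
  have h5 : Real.exp s ≤ (1 + Real.exp t) * (1 + Real.exp s) := by nlinarith
  nlinarith [mul_le_mul_of_nonneg_left h5 h0]

lemma sigm_lip (s t : ℝ) : |sigm s - sigm t| ≤ |s - t| := by
  rcases le_total t s with h | h
  · rw [abs_of_nonneg (by linarith [sigm_mono h]), abs_of_nonneg (by linarith)]
    exact sigm_sub_le h
  · rw [abs_of_nonpos (by linarith [sigm_mono h]), abs_of_nonpos (by linarith)]
    linarith [sigm_sub_le h]

lemma softplus_nonneg (t : ℝ) : 0 ≤ Real.log (1 + Real.exp t) := by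
  have := Real.exp_pos t
  have : (1:ℝ) ≤ 1 + Real.exp t := by linarith
  exact Real.log_nonneg this

lemma softplus_le (t : ℝ) : Real.log (1 + Real.exp t) ≤ 1 + |t| := by
  have h1 : 1 + Real.exp t ≤ 2 * Real.exp |t| := by
    have h2 : Real.exp t ≤ Real.exp |t| := Real.exp_le_exp.2 (le_abs_self t)
    have h3 : (1:ℝ) ≤ Real.exp |t| := Real.one_le_exp (abs_nonneg t)
    linarith
  calc Real.log (1 + Real.exp t) ≤ Real.log (2 * Real.exp |t|) :=
        Real.log_le_log (by positivity) h1
    _ = Real.log 2 + |t| := by rw [Real.log_mul (by norm_num) (Real.exp_ne_zero _), Real.log_exp]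
    _ ≤ 1 + |t| := by
        have : Real.log 2 ≤ 2 - 1 := Real.log_le_sub_one_of_pos (by norm_num)
        linarith

lemma softplus_mono {t s : ℝ} (h : t ≤ s) :
    Real.log (1 + Real.exp t) ≤ Real.log (1 + Real.exp s) := by
  have := Real.exp_le_exp.2 h
  exact Real.log_le_log (one_add_exp_pos t) (by linarith)

lemma softplus_sub_le {t s : ℝ} (h : t ≤ s) :
    Real.log (1 + Real.exp s) - Real.log (1 + Real.exp t) ≤ s - t := by
  have h1 : 1 + Real.exp s ≤ Real.exp (s - t) * (1 + Real.exp t) := by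
    have h2 : (1:ℝ) ≤ Real.exp (s - t) := Real.one_le_exp (by linarith)
    have h3 : Real.exp (s - t) * Real.exp t = Real.exp s := by rw [← Real.exp_add]; ring_nf
    nlinarith [Real.exp_pos t]
  have h4 : Real.log (1 + Real.exp s) ≤ (s - t) + Real.log (1 + Real.exp t) := by
    calc Real.log (1 + Real.exp s) ≤ Real.log (Real.exp (s - t) * (1 + Real.exp t)) :=
          Real.log_le_log (one_add_exp_pos s) h1
      _ = (s - t) + Real.log (1 + Real.exp t) := by
          rw [Real.log_mul (Real.exp_ne_zero _) (ne_of_gt (one_add_exp_pos t)), Real.log_exp]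
  linarith

lemma softplus_lip (s t : ℝ) :
    |Real.log (1 + Real.exp s) - Real.log (1 + Real.exp t)| ≤ |s - t| := by
  rcases le_total t s with h | h
  · rw [abs_of_nonneg (by linarith [softplus_mono h]), abs_of_nonneg (by linarith)]
    exact softplus_sub_le h
  · rw [abs_of_nonpos (by linarith [softplus_mono h]), abs_of_nonpos (by linarith)]
    linarith [softplus_sub_le h]

lemma inner_abs_le (v x : Evec d) : |⟪v, x⟫| ≤ ‖v‖ * ‖x‖ := abs_real_inner_le_norm v x

lemma accProb_pos {lam : Evec d} {xy : Evec d × ℝ} (hy : xy.2 = 0 ∨ xy.2 = 1) :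
    0 < accProb lam xy := by
  have h1 := sigm_pos ⟪lam, xy.1⟫
  have h2 := sigm_lt_one ⟪lam, xy.1⟫
  rcases hy with h | h <;> rw [accProb, h]
  · rw [abs_of_nonpos (by linarith)]; linarith
  · rw [abs_of_nonneg (by linarith)]; linarith

lemma accProb_lt_one {lam : Evec d} {xy : Evec d × ℝ} (hy : xy.2 = 0 ∨ xy.2 = 1) :
    accProb lam xy < 1 := by
  have h1 := sigm_pos ⟪lam, xy.1⟫
  have h2 := sigm_lt_one ⟪lam, xy.1⟫
  rcases hy with h | h <;> rw [accProb, h]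
  · rw [abs_of_nonpos (by linarith)]; linarith
  · rw [abs_of_nonneg (by linarith)]; linarith

lemma accProb_nonneg (lam : Evec d) (xy : Evec d × ℝ) : 0 ≤ accProb lam xy := abs_nonneg _

lemma accProb_le_one {lam : Evec d} {xy : Evec d × ℝ} (hy : xy.2 = 0 ∨ xy.2 = 1) :
    accProb lam xy ≤ 1 := le_of_lt (accProb_lt_one hy)

lemma accProb_lip (lam lam' : Evec d) (xy : Evec d × ℝ) :
    |accProb lam xy - accProb lam' xy| ≤ ‖lam - lam'‖ * ‖xy.1‖ := by
  have h1 : |accProb lam xy - accProb lam' xy|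
      ≤ |(xy.2 - sigm ⟪lam, xy.1⟫) - (xy.2 - sigm ⟪lam', xy.1⟫)| :=
    abs_abs_sub_abs_le_abs_sub _ _
  have h2 : (xy.2 - sigm ⟪lam, xy.1⟫) - (xy.2 - sigm ⟪lam', xy.1⟫)
      = sigm ⟪lam', xy.1⟫ - sigm ⟪lam, xy.1⟫ := by ring
  rw [h2] at h1
  calc |accProb lam xy - accProb lam' xy| ≤ |sigm ⟪lam', xy.1⟫ - sigm ⟪lam, xy.1⟫| := h1
    _ ≤ |⟪lam', xy.1⟫ - ⟪lam, xy.1⟫| := sigm_lip _ _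
    _ = |⟪lam' - lam, xy.1⟫| := by rw [inner_sub_left]
    _ ≤ ‖lam' - lam‖ * ‖xy.1‖ := inner_abs_le _ _
    _ = ‖lam - lam'‖ * ‖xy.1‖ := by rw [norm_sub_rev]

lemma logisticLoss_bound {w : Evec d} {xy : Evec d × ℝ} (hy : xy.2 = 0 ∨ xy.2 = 1) :
    |logisticLoss w xy| ≤ (1 + 2 * ‖w‖) * (1 + ‖xy.1‖) := by
  have hη := inner_abs_le w xy.1
  have hy1 : |xy.2| ≤ 1 := by rcases hy with h | h <;> rw [h] <;> norm_num
  have h1 : |logisticLoss w xy| ≤ |xy.2| * |⟪w, xy.1⟫| + (1 + |⟪w, xy.1⟫|) := by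
    rw [logisticLoss]
    calc |(-xy.2 * ⟪w, xy.1⟫ + Real.log (1 + Real.exp ⟪w, xy.1⟫))|
        ≤ |(-xy.2 * ⟪w, xy.1⟫)| + |Real.log (1 + Real.exp ⟪w, xy.1⟫)| := abs_add_le _ _
      _ ≤ |xy.2| * |⟪w, xy.1⟫| + (1 + |⟪w, xy.1⟫|) := by
          rw [abs_mul, abs_neg]
          have h2 : |Real.log (1 + Real.exp ⟪w, xy.1⟫)| ≤ 1 + |⟪w, xy.1⟫| := by
            rw [abs_of_nonneg (softplus_nonneg _)]; exact softplus_le _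
          linarith
  have hx : (0:ℝ) ≤ ‖xy.1‖ := norm_nonneg _
  have hw : (0:ℝ) ≤ ‖w‖ := norm_nonneg _
  have h3 : |⟪w, xy.1⟫| ≥ 0 := abs_nonneg _
  nlinarith [mul_le_mul_of_nonneg_right hy1 h3]

lemma logisticLoss_lip {w w' : Evec d} {xy : Evec d × ℝ} (hy : xy.2 = 0 ∨ xy.2 = 1) :
    |logisticLoss w xy - logisticLoss w' xy| ≤ 2 * (‖w - w'‖ * ‖xy.1‖) := by
  have hy1 : |xy.2| ≤ 1 := by rcases hy with h | h <;> rw [h] <;> norm_num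
  have hd : |⟪w, xy.1⟫ - ⟪w', xy.1⟫| ≤ ‖w - w'‖ * ‖xy.1‖ := by
    rw [← inner_sub_left]; exact inner_abs_le _ _
  have h1 : |logisticLoss w xy - logisticLoss w' xy|
      ≤ |xy.2| * |⟪w, xy.1⟫ - ⟪w', xy.1⟫|
        + |Real.log (1 + Real.exp ⟪w, xy.1⟫) - Real.log (1 + Real.exp ⟪w', xy.1⟫)| := by
    rw [logisticLoss, logisticLoss]
    have expand : -xy.2 * ⟪w, xy.1⟫ + Real.log (1 + Real.exp ⟪w, xy.1⟫)
        - (-xy.2 * ⟪w', xy.1⟫ + Real.log (1 + Real.exp ⟪w', xy.1⟫))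
        = -xy.2 * (⟪w, xy.1⟫ - ⟪w', xy.1⟫)
          + (Real.log (1 + Real.exp ⟪w, xy.1⟫) - Real.log (1 + Real.exp ⟪w', xy.1⟫)) := by ring
    rw [expand]
    calc _ ≤ |(-xy.2 * (⟪w, xy.1⟫ - ⟪w', xy.1⟫))| + _ := abs_add_le _ _
      _ = |xy.2| * |⟪w, xy.1⟫ - ⟪w', xy.1⟫| + _ := by rw [abs_mul, abs_neg]
  have h2 := softplus_lip ⟪w, xy.1⟫ ⟪w', xy.1⟫
  have h3 : |xy.2| * |⟪w, xy.1⟫ - ⟪w', xy.1⟫| ≤ |⟪w, xy.1⟫ - ⟪w', xy.1⟫| := by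
    nlinarith [abs_nonneg (⟪w, xy.1⟫ - ⟪w', xy.1⟫)]
  linarith

section PPPC
variable {A B : Type*} [MeasurableSpace A] [MeasurableSpace B]

lemma mp_pppc (μ₁ μ₂ : Measure A) (ν₁ ν₂ : Measure B)
    [SFinite μ₁] [SFinite μ₂] [SFinite ν₁] [SFinite ν₂] :
    MeasurePreserving (fun p : (A × A) × (B × B) => ((p.1.1, p.2.1), (p.1.2, p.2.2)))
      ((μ₁.prod μ₂).prod (ν₁.prod ν₂)) ((μ₁.prod ν₁).prod (μ₂.prod ν₂)) := by
  have h1 : MeasurePreserving (MeasurableEquiv.prodAssoc : ((A × A) × B × B) ≃ᵐ (A × A × B × B))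
      ((μ₁.prod μ₂).prod (ν₁.prod ν₂)) (μ₁.prod (μ₂.prod (ν₁.prod ν₂))) :=
    ⟨MeasurableEquiv.measurable _, Measure.prodAssoc_prod⟩
  have ha : MeasurePreserving (MeasurableEquiv.prodAssoc.symm : (A × B × B) ≃ᵐ ((A × B) × B))
      (μ₂.prod (ν₁.prod ν₂)) ((μ₂.prod ν₁).prod ν₂) :=
    MeasurePreserving.symm _ ⟨MeasurableEquiv.measurable _, Measure.prodAssoc_prod⟩
  have hb : MeasurePreserving (Prod.map (Prod.swap : A × B → B × A) (id : B → B))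
      ((μ₂.prod ν₁).prod ν₂) ((ν₁.prod μ₂).prod ν₂) :=
    MeasurePreserving.prod Measure.measurePreserving_swap (MeasurePreserving.id _)
  have hc : MeasurePreserving (MeasurableEquiv.prodAssoc : ((B × A) × B) ≃ᵐ (B × A × B))
      ((ν₁.prod μ₂).prod ν₂) (ν₁.prod (μ₂.prod ν₂)) :=
    ⟨MeasurableEquiv.measurable _, Measure.prodAssoc_prod⟩
  have hg : MeasurePreserving (fun q : A × B × B => (q.2.1, (q.1, q.2.2)))
      (μ₂.prod (ν₁.prod ν₂)) (ν₁.prod (μ₂.prod ν₂)) := by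
    have := (hc.comp hb).comp ha
    exact this
  have h2 : MeasurePreserving (Prod.map (id : A → A) (fun q : A × B × B => (q.2.1, (q.1, q.2.2))))
      (μ₁.prod (μ₂.prod (ν₁.prod ν₂))) (μ₁.prod (ν₁.prod (μ₂.prod ν₂))) :=
    MeasurePreserving.prod (MeasurePreserving.id _) hg
  have h3 : MeasurePreserving (MeasurableEquiv.prodAssoc.symm : (A × B × A × B) ≃ᵐ ((A × B) × A × B))
      (μ₁.prod (ν₁.prod (μ₂.prod ν₂))) ((μ₁.prod ν₁).prod (μ₂.prod ν₂)) :=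
    MeasurePreserving.symm _ ⟨MeasurableEquiv.measurable _, Measure.prodAssoc_prod⟩
  have := (h3.comp h2).comp h1
  exact this

end PPPC


/-- Auxiliary: accepted-sample loss summand. -/
def gfun {d : ℕ} (θ lam : Evec d) (v : (Evec d × ℝ) × ℝ) : ℝ :=
  (if v.2 ≤ accProb lam v.1 then (1:ℝ) else 0) * logisticLoss (θ - lam) v.1

/-- Auxiliary: domination function for indicator discrepancies. -/
def tfun {d : ℕ} (θ lamInf : Evec d) (k : ℕ) (v : (Evec d × ℝ) × ℝ) : ℝ :=
  (if |v.2 - accProb lamInf v.1| ≤ ‖v.1.1‖ / (k + 1) then (1:ℝ) else 0) *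
    ((1 + 2 * ‖θ - lamInf‖) * (1 + ‖v.1.1‖))

section integrals
variable {d : ℕ}

local notation "ν₀" => volume.restrict (Set.Ioo (0 : ℝ) 1)

instance : IsProbabilityMeasure (volume.restrict (Set.Ioo (0 : ℝ) 1)) :=
  ⟨by simp [Real.volume_Ioo]⟩

lemma cont_sigm : Continuous sigm := by
  apply Continuous.div Real.continuous_exp (by fun_prop)
  intro t; positivity

lemma cont_inner (lam : Evec d) : Continuous fun x : Evec d => ⟪lam, x⟫ :=
  continuous_const.inner continuous_id

lemma cont_acc (lam : Evec d) : Continuous (accProb (d := d) lam) := by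
  unfold accProb
  exact (continuous_snd.sub (cont_sigm.comp ((cont_inner lam).comp continuous_fst))).abs

lemma cont_loss (w : Evec d) : Continuous (logisticLoss (d := d) w) := by
  unfold logisticLoss
  have h1 : Continuous fun xy : Evec d × ℝ => ⟪w, xy.1⟫ := (cont_inner w).comp continuous_fst
  apply Continuous.add
  · exact (continuous_snd.neg).mul h1
  · apply Continuous.log (by fun_prop)
    intro xy; positivity

lemma meas_gfun (θ lam : Evec d) : Measurable (gfun θ lam) := by
  unfold gfun
  apply Measurable.mul
  · exact Measurable.ite
      (measurableSet_le measurable_snd ((cont_acc lam).measurable.comp measurable_fst))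
      measurable_const measurable_const
  · exact (cont_loss (θ - lam)).measurable.comp measurable_fst

lemma meas_tfun (θ lamInf : Evec d) (k : ℕ) : Measurable (tfun θ lamInf k) := by
  unfold tfun
  apply Measurable.mul
  · refine Measurable.ite (measurableSet_le ?_ ?_) measurable_const measurable_const
    · exact (measurable_snd.sub ((cont_acc lamInf).measurable.comp measurable_fst)).abs
    · exact (by fun_prop : Measurable fun v : (Evec d × ℝ) × ℝ => ‖v.1.1‖ / (k + 1))
  · exact (by fun_prop : Measurable fun v : (Evec d × ℝ) × ℝ =>
      (1 + 2 * ‖θ - lamInf‖) * (1 + ‖v.1.1‖))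

variable (μ : Measure (Evec d × ℝ)) [IsProbabilityMeasure μ]

lemma map_fst_pi : Measure.map Prod.fst (μ.prod ν₀) = μ := by
  rw [Measure.map_fst_prod]; simp

lemma pi_ae (hY : ∀ᵐ xy ∂μ, xy.2 = 0 ∨ xy.2 = 1) :
    ∀ᵐ v ∂(μ.prod ν₀), v.1.2 = 0 ∨ v.1.2 = 1 := by
  have hset : MeasurableSet {xy : Evec d × ℝ | xy.2 = 0 ∨ xy.2 = 1} := by
    refine MeasurableSet.union ?_ ?_ <;>
      exact measurableSet_eq_fun measurable_snd measurable_const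
  have h1 : ∀ᵐ xy ∂(Measure.map Prod.fst (μ.prod ν₀)), xy.2 = 0 ∨ xy.2 = 1 := by
    rw [map_fst_pi μ]; exact hY
  exact (ae_map_iff measurable_fst.aemeasurable hset).mp h1

lemma integrable_comp_fst {h : Evec d × ℝ → ℝ} (hh : AEStronglyMeasurable h μ)
    (hint : Integrable h μ) : Integrable (fun v : (Evec d × ℝ) × ℝ => h v.1) (μ.prod ν₀) := by
  have := (integrable_map_measure (by rwa [map_fst_pi μ]) measurable_fst.aemeasurable).mp
    (by rwa [map_fst_pi μ])
  exact this

lemma integrable_poly (C : ℝ) (hX : Integrable (fun xy : Evec d × ℝ => ‖xy.1‖) μ) :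
    Integrable (fun xy : Evec d × ℝ => C * (1 + ‖xy.1‖)) μ := by
  have : (fun xy : Evec d × ℝ => C * (1 + ‖xy.1‖))
      = fun xy => C + C * ‖xy.1‖ := by funext xy; ring
  rw [this]
  exact (integrable_const C).add (hX.const_mul C)

lemma integrable_poly_pi (C : ℝ) (hX : Integrable (fun xy : Evec d × ℝ => ‖xy.1‖) μ) :
    Integrable (fun v : (Evec d × ℝ) × ℝ => C * (1 + ‖v.1.1‖)) (μ.prod ν₀) :=
  integrable_comp_fst μ ((integrable_poly μ C hX).aestronglyMeasurable) (integrable_poly μ C hX)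

lemma integrable_norm_pi (hX : Integrable (fun xy : Evec d × ℝ => ‖xy.1‖) μ) :
    Integrable (fun v : (Evec d × ℝ) × ℝ => ‖v.1.1‖) (μ.prod ν₀) :=
  integrable_comp_fst μ hX.aestronglyMeasurable hX

lemma integrable_gfun (hY : ∀ᵐ xy ∂μ, xy.2 = 0 ∨ xy.2 = 1)
    (hX : Integrable (fun xy : Evec d × ℝ => ‖xy.1‖) μ) (θ lam : Evec d) :
    Integrable (gfun θ lam) (μ.prod ν₀) := by
  refine Integrable.mono' (integrable_poly_pi μ (1 + 2 * ‖θ - lam‖) hX)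
    (meas_gfun θ lam).aestronglyMeasurable ?_
  filter_upwards [pi_ae μ hY] with v hv
  rw [gfun, norm_mul]
  have h1 := logisticLoss_bound (w := θ - lam) hv
  have h2 : ‖if v.2 ≤ accProb lam v.1 then (1:ℝ) else 0‖ ≤ 1 := by
    split <;> simp
  have h3 : (0:ℝ) ≤ (1 + 2 * ‖θ - lam‖) * (1 + ‖v.1.1‖) := by positivity
  calc ‖if v.2 ≤ accProb lam v.1 then (1:ℝ) else 0‖ * ‖logisticLoss (θ - lam) v.1‖
      ≤ 1 * ((1 + 2 * ‖θ - lam‖) * (1 + ‖v.1.1‖)) := by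
        apply mul_le_mul h2 _ (norm_nonneg _) zero_le_one
        rwa [Real.norm_eq_abs]
    _ = (1 + 2 * ‖θ - lam‖) * (1 + ‖v.1.1‖) := one_mul _

lemma integrable_tfun (hX : Integrable (fun xy : Evec d × ℝ => ‖xy.1‖) μ) (θ lamInf : Evec d)
    (k : ℕ) : Integrable (tfun θ lamInf k) (μ.prod ν₀) := by
  refine Integrable.mono' (integrable_poly_pi μ (1 + 2 * ‖θ - lamInf‖) hX)
    (meas_tfun θ lamInf k).aestronglyMeasurable ?_
  refine Eventually.of_forall fun v => ?_
  rw [tfun, norm_mul]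
  have h3 : (0:ℝ) ≤ (1 + 2 * ‖θ - lamInf‖) * (1 + ‖v.1.1‖) := by positivity
  have h2 : ‖if |v.2 - accProb lamInf v.1| ≤ ‖v.1.1‖ / (k + 1) then (1:ℝ) else 0‖ ≤ 1 := by
    split <;> simp
  calc _ ≤ 1 * ((1 + 2 * ‖θ - lamInf‖) * (1 + ‖v.1.1‖)) := by
        apply mul_le_mul h2 _ (norm_nonneg _) zero_le_one
        rw [Real.norm_eq_abs, abs_of_nonneg h3]
    _ = _ := one_mul _

lemma integrable_accProb (hY : ∀ᵐ xy ∂μ, xy.2 = 0 ∨ xy.2 = 1) (lam : Evec d) :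
    Integrable (accProb lam) μ := by
  refine Integrable.mono' (integrable_const 1) (cont_acc lam).measurable.aestronglyMeasurable ?_
  filter_upwards [hY] with xy hxy
  rw [Real.norm_eq_abs, abs_of_nonneg (accProb_nonneg _ _)]
  exact le_of_lt (accProb_lt_one hxy)

lemma aBar_pos (hY : ∀ᵐ xy ∂μ, xy.2 = 0 ∨ xy.2 = 1) (lam : Evec d) : 0 < aBar μ lam := by
  rw [aBar, integral_pos_iff_support_of_nonneg_ae
    (Eventually.of_forall fun xy => accProb_nonneg lam xy) (integrable_accProb μ hY lam)]
  by_contra hc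
  push_neg at hc
  have h0 : μ (Function.support (accProb lam)) = 0 := le_antisymm (by simpa using hc) zero_le
  have hsub : (Function.support (accProb lam))ᶜ ⊆ {xy | ¬(xy.2 = 0 ∨ xy.2 = 1)} := by
    intro xy hxy hgood
    exact hxy (ne_of_gt (accProb_pos hgood))
  have h1 : μ (Function.support (accProb lam))ᶜ = 0 :=
    measure_mono_null hsub (ae_iff.mp hY)
  have := measure_univ (μ := μ)
  have h2 := measure_union_le (μ := μ) (Function.support (accProb lam))
    (Function.support (accProb lam))ᶜ
  rw [Set.union_compl_self, h0, h1] at h2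
  simp [this] at h2

lemma aBar_lip (hY : ∀ᵐ xy ∂μ, xy.2 = 0 ∨ xy.2 = 1)
    (hX : Integrable (fun xy : Evec d × ℝ => ‖xy.1‖) μ) (lam lam' : Evec d) :
    |aBar μ lam - aBar μ lam'| ≤ ‖lam - lam'‖ * ∫ xy, ‖xy.1‖ ∂μ := by
  rw [aBar, aBar, ← integral_sub (integrable_accProb μ hY lam) (integrable_accProb μ hY lam')]
  calc |∫ xy, (accProb lam xy - accProb lam' xy) ∂μ|
      ≤ ∫ xy, |accProb lam xy - accProb lam' xy| ∂μ := by
        simpa [Real.norm_eq_abs] using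
          norm_integral_le_integral_norm (fun xy => accProb lam xy - accProb lam' xy) (μ := μ)
    _ ≤ ∫ xy, ‖lam - lam'‖ * ‖xy.1‖ ∂μ := by
        refine integral_mono ((integrable_accProb μ hY lam).sub
          (integrable_accProb μ hY lam')).abs (hX.const_mul _) fun xy => accProb_lip _ _ _
    _ = ‖lam - lam'‖ * ∫ xy, ‖xy.1‖ ∂μ := integral_const_mul _ _


lemma int_norm_pi :
    ∫ v : (Evec d × ℝ) × ℝ, ‖v.1.1‖ ∂(μ.prod ν₀) = ∫ xy, ‖xy.1‖ ∂μ := by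
  have h := integral_map (μ := μ.prod ν₀) (φ := Prod.fst) measurable_fst.aemeasurable
    (f := fun xy : Evec d × ℝ => ‖xy.1‖)
    ((continuous_norm.comp continuous_fst).aestronglyMeasurable)
  rw [map_fst_pi μ] at h
  exact h.symm

end integrals

section Tseven
variable {d : ℕ}
local notation "ν₀" => volume.restrict (Set.Ioo (0 : ℝ) 1)
variable (μ : Measure (Evec d × ℝ)) [IsProbabilityMeasure μ]

lemma inner_int (a c : ℝ) (h0 : 0 < a) (h1 : a < 1) :
    ∫ u, (if u ≤ a then (1:ℝ) else 0) * c ∂ν₀ = a * c := by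
  have hind : (fun u : ℝ => (if u ≤ a then (1:ℝ) else 0) * c)
      = Set.indicator (Set.Iic a) (fun _ => c) := by
    funext u
    by_cases h : u ≤ a <;> simp [Set.indicator, Set.mem_Iic, h]
  rw [hind, integral_indicator_const c measurableSet_Iic]
  have hset : Set.Iic a ∩ Set.Ioo (0:ℝ) 1 = Set.Ioc 0 a := by
    ext u
    simp only [Set.mem_inter_iff, Set.mem_Iic, Set.mem_Ioo, Set.mem_Ioc]
    constructor
    · rintro ⟨h2, h3, h4⟩; exact ⟨h3, h2⟩
    · rintro ⟨h2, h3⟩; exact ⟨h3, h2, lt_of_le_of_lt h3 h1⟩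
  rw [measureReal_def, Measure.restrict_apply measurableSet_Iic, hset, Real.volume_Ioc]
  simp [ENNReal.toReal_ofReal (le_of_lt h0), smul_eq_mul]

lemma gfun_int_eq (hY : ∀ᵐ xy ∂μ, xy.2 = 0 ∨ xy.2 = 1)
    (hX : Integrable (fun xy : Evec d × ℝ => ‖xy.1‖) μ) (θ lamInf : Evec d) :
    ∫ v, gfun θ lamInf v ∂(μ.prod ν₀) = aBar μ lamInf * Rpop μ lamInf (θ - lamInf) := by
  have habar := aBar_pos μ hY lamInf
  have hfub := integral_prod (μ := μ) (ν := ν₀) (gfun θ lamInf)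
    (integrable_gfun μ hY hX θ lamInf)
  have hinner : (fun xy => ∫ u, gfun θ lamInf (xy, u) ∂ν₀)
      =ᵐ[μ] fun xy => accProb lamInf xy * logisticLoss (θ - lamInf) xy := by
    filter_upwards [hY] with xy hxy
    exact inner_int (accProb lamInf xy) (logisticLoss (θ - lamInf) xy)
      (accProb_pos hxy) (accProb_lt_one hxy)
  rw [hfub, integral_congr_ae hinner]
  have hmeasf : Measurable fun xy : Evec d × ℝ =>
      (accProb lamInf xy / aBar μ lamInf).toNNReal :=
    ((cont_acc lamInf).measurable.div_const _).real_toNNReal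
  have hdens : (fun xy : Evec d × ℝ => ENNReal.ofReal (accProb lamInf xy / aBar μ lamInf))
      = fun xy => ((accProb lamInf xy / aBar μ lamInf).toNNReal : ℝ≥0∞) := rfl
  rw [Rpop, tiltedLaw, hdens,
    integral_withDensity_eq_integral_smul hmeasf (logisticLoss (θ - lamInf)),
    ← integral_const_mul]
  apply integral_congr_ae
  refine Eventually.of_forall fun xy => ?_
  have h0 : 0 ≤ accProb lamInf xy / aBar μ lamInf :=
    div_nonneg (accProb_nonneg _ _) (le_of_lt habar)
  show accProb lamInf xy * logisticLoss (θ - lamInf) xy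
      = aBar μ lamInf * ((accProb lamInf xy / aBar μ lamInf).toNNReal
          • logisticLoss (θ - lamInf) xy)
  rw [NNReal.smul_def, Real.coe_toNNReal _ h0, smul_eq_mul]
  field_simp

lemma tfun_nonneg (θ lamInf : Evec d) (k : ℕ) (v : (Evec d × ℝ) × ℝ) :
    0 ≤ tfun θ lamInf k v := by
  rw [tfun]
  have h3 : (0:ℝ) ≤ (1 + 2 * ‖θ - lamInf‖) * (1 + ‖v.1.1‖) := by positivity
  split
  · simpa using h3
  · simp

lemma tfun_int_tendsto (hX : Integrable (fun xy : Evec d × ℝ => ‖xy.1‖) μ) (θ lamInf : Evec d) :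
    Tendsto (fun k => ∫ v, tfun θ lamInf k v ∂(μ.prod ν₀)) atTop (𝓝 0) := by
  have hB : (0:ℝ) ≤ 1 + 2 * ‖θ - lamInf‖ := by positivity
  have hD : MeasurableSet {v : (Evec d × ℝ) × ℝ | v.2 = accProb lamInf v.1} :=
    measurableSet_eq_fun measurable_snd ((cont_acc lamInf).measurable.comp measurable_fst)
  have hDnull : (μ.prod ν₀) {v : (Evec d × ℝ) × ℝ | v.2 = accProb lamInf v.1} = 0 := by
    rw [Measure.prod_apply hD]
    have hz : ∀ xy : Evec d × ℝ,
        ν₀ (Prod.mk xy ⁻¹' {v : (Evec d × ℝ) × ℝ | v.2 = accProb lamInf v.1}) = 0 := by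
      intro xy
      have hpre : Prod.mk xy ⁻¹' {v : (Evec d × ℝ) × ℝ | v.2 = accProb lamInf v.1}
          = {accProb lamInf xy} := by
        ext u; simp [Set.mem_preimage, Set.mem_singleton_iff]
      rw [hpre]
      refine le_antisymm ?_ zero_le
      calc ν₀ {accProb lamInf xy} ≤ volume {accProb lamInf xy} :=
            Measure.restrict_le_self _
        _ = 0 := Real.volume_singleton
    simp only [hz, lintegral_zero]
  set tlim : (Evec d × ℝ) × ℝ → ℝ := fun v =>
    if v.2 = accProb lamInf v.1 then (1 + 2 * ‖θ - lamInf‖) * (1 + ‖v.1.1‖) else 0 with htlim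
  have hzero : ∫ v, tlim v ∂(μ.prod ν₀) = 0 := by
    apply integral_eq_zero_of_ae
    rw [Filter.EventuallyEq, ae_iff]
    apply measure_mono_null _ hDnull
    intro v hv
    simp only [Set.mem_setOf_eq] at hv ⊢
    by_contra h
    apply hv
    show tlim v = 0
    rw [htlim]
    exact if_neg h
  have hbound : ∀ k : ℕ, ∀ᵐ v ∂(μ.prod ν₀),
      ‖tfun θ lamInf k v‖ ≤ (1 + 2 * ‖θ - lamInf‖) * (1 + ‖v.1.1‖) := by
    intro k
    refine Eventually.of_forall fun v => ?_
    rw [Real.norm_eq_abs, abs_of_nonneg (tfun_nonneg θ lamInf k v), tfun]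
    have h3 : (0:ℝ) ≤ (1 + 2 * ‖θ - lamInf‖) * (1 + ‖v.1.1‖) := by positivity
    split
    · simp
    · simpa using h3
  have hlim : ∀ v : (Evec d × ℝ) × ℝ,
      Tendsto (fun k : ℕ => tfun θ lamInf k v) atTop (𝓝 (tlim v)) := by
    intro v
    by_cases hv : v.2 = accProb lamInf v.1
    · have heq : ∀ k : ℕ, tfun θ lamInf k v = (1 + 2 * ‖θ - lamInf‖) * (1 + ‖v.1.1‖) := by
        intro k
        rw [tfun, if_pos, one_mul]
        rw [hv, sub_self, abs_zero]
        positivity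
      have htv : tlim v = (1 + 2 * ‖θ - lamInf‖) * (1 + ‖v.1.1‖) := by
        rw [htlim]; exact if_pos hv
      rw [htv]
      exact Tendsto.congr (fun k => (heq k).symm) tendsto_const_nhds
    · have hpos : 0 < |v.2 - accProb lamInf v.1| := abs_pos.2 (sub_ne_zero.2 hv)
      have hto : Tendsto (fun k : ℕ => ‖v.1.1‖ / (k + 1)) atTop (𝓝 0) := by
        have h1 := (tendsto_const_div_atTop_nhds_zero_nat ‖v.1.1‖).comp
          (tendsto_add_atTop_nat 1)
        refine h1.congr fun k => ?_
        simp only [Function.comp_apply]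
        push_cast
        ring
      have hev : ∀ᶠ k : ℕ in atTop, tfun θ lamInf k v = 0 := by
        filter_upwards [hto.eventually (gt_mem_nhds hpos)] with k hk
        rw [tfun, if_neg (by push_neg; exact hk), zero_mul]
      have htv : tlim v = 0 := by rw [htlim]; exact if_neg hv
      rw [htv]
      exact Tendsto.congr' (by filter_upwards [hev] with k hk; exact hk.symm)
        tendsto_const_nhds
  have hdct := tendsto_integral_of_dominated_convergence
    (fun v : (Evec d × ℝ) × ℝ => (1 + 2 * ‖θ - lamInf‖) * (1 + ‖v.1.1‖))
    (fun k => (meas_tfun θ lamInf k).aestronglyMeasurable)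
    (integrable_poly_pi μ (1 + 2 * ‖θ - lamInf‖) hX)
    hbound
    (Eventually.of_forall hlim)
  rw [hzero] at hdct
  exact hdct

lemma gfun_diff_le (θ lamInf lam : Evec d) (v : (Evec d × ℝ) × ℝ)
    (hy : v.1.2 = 0 ∨ v.1.2 = 1) (k : ℕ) (hlam : ‖lam - lamInf‖ ≤ 1 / (k + 1)) :
    |gfun θ lam v - gfun θ lamInf v|
      ≤ tfun θ lamInf k v + 2 * (‖lam - lamInf‖ * ‖v.1.1‖) := by
  set z : ℝ := if v.2 ≤ accProb lam v.1 then (1:ℝ) else 0 with hz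
  set z' : ℝ := if v.2 ≤ accProb lamInf v.1 then (1:ℝ) else 0 with hz'
  set ρ := logisticLoss (θ - lam) v.1 with hρ
  set ρ' := logisticLoss (θ - lamInf) v.1 with hρ'
  have hsplit : gfun θ lam v - gfun θ lamInf v = z * (ρ - ρ') + (z - z') * ρ' := by
    rw [gfun, gfun, ← hz, ← hz', ← hρ, ← hρ']; ring
  have hz01 : |z| ≤ 1 := by rw [hz]; split <;> simp
  have hrr' : |ρ - ρ'| ≤ 2 * (‖lam - lamInf‖ * ‖v.1.1‖) := by
    have h := logisticLoss_lip (w := θ - lam) (w' := θ - lamInf) (xy := v.1) hy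
    have hw : θ - lam - (θ - lamInf) = lamInf - lam := by abel
    rw [hw, norm_sub_rev] at h
    exact h
  have hterm1 : |z * (ρ - ρ')| ≤ 2 * (‖lam - lamInf‖ * ‖v.1.1‖) := by
    rw [abs_mul]
    calc |z| * |ρ - ρ'| ≤ 1 * |ρ - ρ'| :=
          mul_le_mul_of_nonneg_right hz01 (abs_nonneg _)
      _ = |ρ - ρ'| := one_mul _
      _ ≤ _ := hrr'
  have hacc : |accProb lam v.1 - accProb lamInf v.1| ≤ ‖v.1.1‖ / (k + 1) := by
    calc |accProb lam v.1 - accProb lamInf v.1| ≤ ‖lam - lamInf‖ * ‖v.1.1‖ :=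
          accProb_lip _ _ _
      _ ≤ (1 / (k + 1)) * ‖v.1.1‖ :=
          mul_le_mul_of_nonneg_right hlam (norm_nonneg _)
      _ = ‖v.1.1‖ / (k + 1) := by ring
  have hρ'b : |ρ'| ≤ (1 + 2 * ‖θ - lamInf‖) * (1 + ‖v.1.1‖) := logisticLoss_bound hy
  have habs := abs_le.1 hacc
  have hterm2 : |(z - z') * ρ'| ≤ tfun θ lamInf k v := by
    by_cases h1 : v.2 ≤ accProb lam v.1 <;> by_cases h2 : v.2 ≤ accProb lamInf v.1
    · rw [hz, hz', if_pos h1, if_pos h2, sub_self, zero_mul, abs_zero]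
      exact tfun_nonneg _ _ _ _
    · have hcond : |v.2 - accProb lamInf v.1| ≤ ‖v.1.1‖ / (k + 1) := by
        push_neg at h2
        rw [abs_of_nonneg (by linarith)]
        linarith
      rw [hz, hz', if_pos h1, if_neg h2, tfun, if_pos hcond, one_mul]
      calc |(1 - 0) * ρ'| = |ρ'| := by norm_num
        _ ≤ _ := hρ'b
    · have hcond : |v.2 - accProb lamInf v.1| ≤ ‖v.1.1‖ / (k + 1) := by
        push_neg at h1
        rw [abs_of_nonpos (by linarith)]
        linarith
      rw [hz, hz', if_neg h1, if_pos h2, tfun, if_pos hcond, one_mul]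
      calc |(0 - 1) * ρ'| = |ρ'| := by rw [abs_mul]; norm_num
        _ ≤ _ := hρ'b
    · rw [hz, hz', if_neg h1, if_neg h2, sub_self, zero_mul, abs_zero]
      exact tfun_nonneg _ _ _ _
  calc |gfun θ lam v - gfun θ lamInf v| ≤ |z * (ρ - ρ')| + |(z - z') * ρ'| := by
        rw [hsplit]; exact abs_add_le _ _
    _ ≤ _ := by linarith


end Tseven

section indep
variable {d : ℕ} (μ : Measure (Evec d × ℝ)) [IsProbabilityMeasure μ]
    {Ω : Type*} [MeasurableSpace Ω] (P : Measure Ω) [IsProbabilityMeasure P]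
    (X : ℕ → Ω → Evec d) (Y U : ℕ → Ω → ℝ) (Lam : ℕ → Ω → Evec d)
    (hXmeas : ∀ i, Measurable (X i)) (hYmeas : ∀ i, Measurable (Y i))
    (hUmeas : ∀ i, Measurable (U i)) (hLammeas : ∀ n, Measurable (Lam n))
    (hiid : iIndepFun (fun i ω => (X i ω, Y i ω)) P)
    (hlaw : ∀ i, Measure.map (fun ω => (X i ω, Y i ω)) P = μ)
    (hUiid : iIndepFun U P)
    (hUlaw : ∀ i, Measure.map (U i) P = volume.restrict (Set.Ioo (0 : ℝ) 1))
    (hUindep : IndepFun (fun ω => fun i => U i ω)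
      (fun ω => ((fun i => (X i ω, Y i ω)), fun n => Lam n ω)) P)

local notation "ν₀" => volume.restrict (Set.Ioo (0 : ℝ) 1)

instance inst_s7 : IsProbabilityMeasure (volume.restrict (Set.Ioo (0 : ℝ) 1)) :=
  ⟨by simp [Real.volume_Ioo]⟩

include hXmeas hYmeas hUmeas hUindep in
lemma WU_indep (i j : ℕ) :
    IndepFun (fun ω => ((X i ω, Y i ω), (X j ω, Y j ω))) (fun ω => (U i ω, U j ω)) P := by
  have h1 : Measurable fun u : ℕ → ℝ => (u i, u j) :=
    (measurable_pi_apply i).prodMk (measurable_pi_apply j)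
  have h2 : Measurable fun p : (ℕ → Evec d × ℝ) × (ℕ → Evec d) => (p.1 i, p.1 j) :=
    ((measurable_pi_apply i).comp measurable_fst).prodMk
      ((measurable_pi_apply j).comp measurable_fst)
  exact (hUindep.comp h1 h2).symm

include hXmeas hYmeas hUmeas hUindep in
lemma WU_indep_single (i : ℕ) :
    IndepFun (fun ω => (X i ω, Y i ω)) (U i) P := by
  have h1 : Measurable fun u : ℕ → ℝ => u i := measurable_pi_apply i
  have h2 : Measurable fun p : (ℕ → Evec d × ℝ) × (ℕ → Evec d) => p.1 i :=
    (measurable_pi_apply i).comp measurable_fst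
  exact (hUindep.comp h1 h2).symm

include hXmeas hYmeas hUmeas hUindep hlaw hUlaw in
lemma map_V (i : ℕ) :
    Measure.map (fun ω => ((X i ω, Y i ω), U i ω)) P = μ.prod ν₀ := by
  have hW : Measurable fun ω => (X i ω, Y i ω) := (hXmeas i).prodMk (hYmeas i)
  rw [(indepFun_iff_map_prod_eq_prod_map_map hW.aemeasurable (hUmeas i).aemeasurable).mp
    (WU_indep_single P X Y U Lam hXmeas hYmeas hUmeas hUindep i), hlaw i, hUlaw i]

include hXmeas hYmeas hUmeas hiid hlaw hUiid hUlaw hUindep in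
lemma V_pairwise_indep {i j : ℕ} (hij : i ≠ j) :
    IndepFun (fun ω => ((X i ω, Y i ω), U i ω)) (fun ω => ((X j ω, Y j ω), U j ω)) P := by
  have hWi : Measurable fun ω => (X i ω, Y i ω) := (hXmeas i).prodMk (hYmeas i)
  have hWj : Measurable fun ω => (X j ω, Y j ω) := (hXmeas j).prodMk (hYmeas j)
  have hWW : Measure.map (fun ω => ((X i ω, Y i ω), (X j ω, Y j ω))) P = μ.prod μ := by
    rw [(indepFun_iff_map_prod_eq_prod_map_map hWi.aemeasurable hWj.aemeasurable).mp
      (hiid.indepFun hij), hlaw i, hlaw j]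
  have hUU : Measure.map (fun ω => (U i ω, U j ω)) P = Measure.prod ν₀ ν₀ := by
    rw [(indepFun_iff_map_prod_eq_prod_map_map (hUmeas i).aemeasurable
      (hUmeas j).aemeasurable).mp (hUiid.indepFun hij), hUlaw i, hUlaw j]
  have hF : Measure.map (fun ω => (((X i ω, Y i ω), (X j ω, Y j ω)), (U i ω, U j ω))) P
      = (μ.prod μ).prod (Measure.prod ν₀ ν₀) := by
    rw [(indepFun_iff_map_prod_eq_prod_map_map (hWi.prodMk hWj).aemeasurable
      ((hUmeas i).prodMk (hUmeas j)).aemeasurable).mp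
      (WU_indep P X Y U Lam hXmeas hYmeas hUmeas hUindep i j), hWW, hUU]
  have he := mp_pppc μ μ ν₀ ν₀
  have hVV : Measure.map (fun ω => (((X i ω, Y i ω), U i ω), ((X j ω, Y j ω), U j ω))) P
      = (μ.prod ν₀).prod (μ.prod ν₀) := by
    have hcomp : (fun ω => (((X i ω, Y i ω), U i ω), ((X j ω, Y j ω), U j ω)))
        = (fun p : ((Evec d × ℝ) × (Evec d × ℝ)) × (ℝ × ℝ) =>
            ((p.1.1, p.2.1), (p.1.2, p.2.2)))
          ∘ (fun ω => (((X i ω, Y i ω), (X j ω, Y j ω)), (U i ω, U j ω))) := rfl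
    rw [hcomp, ← Measure.map_map he.measurable
      ((hWi.prodMk hWj).prodMk ((hUmeas i).prodMk (hUmeas j))), hF, he.map_eq]
  exact (indepFun_iff_map_prod_eq_prod_map_map
    (hWi.prodMk (hUmeas i)).aemeasurable (hWj.prodMk (hUmeas j)).aemeasurable).mpr
    (by rw [hVV, map_V μ P X Y U Lam hXmeas hYmeas hUmeas hlaw hUlaw hUindep i,
            map_V μ P X Y U Lam hXmeas hYmeas hUmeas hlaw hUlaw hUindep j])

end indep

section Teight
variable {d : ℕ}
local notation "ν₀" => volume.restrict (Set.Ioo (0 : ℝ) 1)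
variable (μ : Measure (Evec d × ℝ)) [IsProbabilityMeasure μ]
    {Ω : Type*} [MeasurableSpace Ω] (P : Measure Ω) [IsProbabilityMeasure P]
    (X : ℕ → Ω → Evec d) (Y U : ℕ → Ω → ℝ) (Lam : ℕ → Ω → Evec d)
    (hXmeas : ∀ i, Measurable (X i)) (hYmeas : ∀ i, Measurable (Y i))
    (hUmeas : ∀ i, Measurable (U i)) (hLammeas : ∀ n, Measurable (Lam n))
    (hiid : iIndepFun (fun i ω => (X i ω, Y i ω)) P)
    (hlaw : ∀ i, Measure.map (fun ω => (X i ω, Y i ω)) P = μ)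
    (hUiid : iIndepFun U P)
    (hUlaw : ∀ i, Measure.map (U i) P = volume.restrict (Set.Ioo (0 : ℝ) 1))
    (hUindep : IndepFun (fun ω => fun i => U i ω)
      (fun ω => ((fun i => (X i ω, Y i ω)), fun n => Lam n ω)) P)

include hXmeas hYmeas hUmeas hiid hlaw hUiid hUlaw hUindep in
lemma slln_comp (f : (Evec d × ℝ) × ℝ → ℝ) (hf : Measurable f)
    (hfint : Integrable f (μ.prod ν₀)) :
    ∀ᵐ ω ∂P, Tendsto (fun n => (∑ i ∈ Finset.range n, f ((X i ω, Y i ω), U i ω)) / n)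
      atTop (𝓝 (∫ v, f v ∂(μ.prod ν₀))) := by
  have hVmeas : ∀ i, Measurable fun ω => ((X i ω, Y i ω), U i ω) :=
    fun i => ((hXmeas i).prodMk (hYmeas i)).prodMk (hUmeas i)
  have hint0 : Integrable (fun ω => f ((X 0 ω, Y 0 ω), U 0 ω)) P := by
    have := (integrable_map_measure (f := fun ω => ((X 0 ω, Y 0 ω), U 0 ω)) (g := f)
      (by rw [map_V μ P X Y U Lam hXmeas hYmeas hUmeas hlaw hUlaw hUindep 0]
          exact hfint.aestronglyMeasurable)
      (hVmeas 0).aemeasurable).mp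
      (by rwa [map_V μ P X Y U Lam hXmeas hYmeas hUmeas hlaw hUlaw hUindep 0])
    exact this
  have hindep : Pairwise (Function.onFun (IndepFun · · P) fun i ω => f ((X i ω, Y i ω), U i ω)) := by
    intro i j hij
    exact (V_pairwise_indep μ P X Y U Lam hXmeas hYmeas hUmeas hiid hlaw hUiid hUlaw
      hUindep hij).comp hf hf
  have hident : ∀ i, IdentDistrib (fun ω => f ((X i ω, Y i ω), U i ω))
      (fun ω => f ((X 0 ω, Y 0 ω), U 0 ω)) P P := by
    intro i
    have hbase : IdentDistrib (fun ω => ((X i ω, Y i ω), U i ω))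
        (fun ω => ((X 0 ω, Y 0 ω), U 0 ω)) P P :=
      ⟨(hVmeas i).aemeasurable, (hVmeas 0).aemeasurable, by
        rw [map_V μ P X Y U Lam hXmeas hYmeas hUmeas hlaw hUlaw hUindep i,
          map_V μ P X Y U Lam hXmeas hYmeas hUmeas hlaw hUlaw hUindep 0]⟩
    exact hbase.comp hf
  have h := strong_law_ae_real (fun i ω => f ((X i ω, Y i ω), U i ω)) hint0 hindep hident
  have hmean : (∫ ω, f ((X 0 ω, Y 0 ω), U 0 ω) ∂P) = ∫ v, f v ∂(μ.prod ν₀) := by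
    rw [← map_V μ P X Y U Lam hXmeas hYmeas hUmeas hlaw hUlaw hUindep 0,
      integral_map (hVmeas 0).aemeasurable hf.aestronglyMeasurable]
  rw [hmean] at h
  exact h

include hXmeas hYmeas hlaw in
lemma Y_good (hY : ∀ᵐ xy ∂μ, xy.2 = 0 ∨ xy.2 = 1) :
    ∀ᵐ ω ∂P, ∀ i, Y i ω = 0 ∨ Y i ω = 1 := by
  rw [ae_all_iff]
  intro i
  have hset : MeasurableSet {xy : Evec d × ℝ | xy.2 = 0 ∨ xy.2 = 1} :=
    MeasurableSet.union (measurableSet_eq_fun measurable_snd measurable_const)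
      (measurableSet_eq_fun measurable_snd measurable_const)
  have h1 : ∀ᵐ xy ∂(Measure.map (fun ω => (X i ω, Y i ω)) P), xy.2 = 0 ∨ xy.2 = 1 := by
    rw [hlaw i]; exact hY
  exact (ae_map_iff ((hXmeas i).prodMk (hYmeas i)).aemeasurable hset).mp h1


lemma div_mono_nonneg {a b c : ℝ} (h : a ≤ b) (hc : 0 ≤ c) : a / c ≤ b / c := by
  rcases eq_or_lt_of_le hc with hc0 | hc0
  · simp [← hc0]
  · exact (div_le_div_iff_of_pos_right hc0).mpr h

include hXmeas hYmeas hUmeas hLammeas in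
lemma key_tendsto (hY : ∀ᵐ xy ∂μ, xy.2 = 0 ∨ xy.2 = 1)
    (hX : Integrable (fun xy : Evec d × ℝ => ‖xy.1‖) μ)
    (θ lamInf : Evec d) (L Er : ℝ) (hEr : 0 ≤ Er) (mk : ℕ → ℝ)
    (hmk : Tendsto mk atTop (𝓝 0)) (ω : Ω)
    (hgood : ∀ i, Y i ω = 0 ∨ Y i ω = 1)
    (hS1 : Tendsto (fun n => (∑ i ∈ Finset.range n,
      gfun θ lamInf ((X i ω, Y i ω), U i ω)) / n) atTop (𝓝 L))
    (hS2 : Tendsto (fun n => (∑ i ∈ Finset.range n, ‖X i ω‖) / n) atTop (𝓝 Er))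
    (hS3 : ∀ k, Tendsto (fun n => (∑ i ∈ Finset.range n,
      tfun θ lamInf k ((X i ω, Y i ω), U i ω)) / n) atTop (𝓝 (mk k)))
    (hErLip : ∀ lam lam' : Evec d, |aBar μ lam - aBar μ lam'| ≤ ‖lam - lam'‖ * Er)
    (m : ℕ → ℕ) (hm : Tendsto m atTop atTop)
    (hconv : Tendsto (fun j => Lam (m j) ω) atTop (𝓝 lamInf)) :
    Tendsto (fun j => Qhat μ X Y U Lam (m j) θ ω) atTop
      (𝓝 ((aBar μ lamInf)⁻¹ * L)) := by
  have habar := aBar_pos μ hY lamInf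
  -- identity for Qhat
  have hQid : ∀ n, Qhat μ X Y U Lam n θ ω = (aBar μ (Lam n ω))⁻¹ *
      ((∑ i ∈ Finset.range n, gfun θ (Lam n ω) ((X i ω, Y i ω), U i ω)) / n) := by
    intro n
    rw [Qhat]
    have hsum : (∑ i ∈ Finset.range n,
        (if U i ω ≤ accProb (Lam n ω) (X i ω, Y i ω) then (1 : ℝ) else 0) *
          (Y i ω * ⟪θ - Lam n ω, X i ω⟫ - Real.log (1 + Real.exp ⟪θ - Lam n ω, X i ω⟫)))
        = -∑ i ∈ Finset.range n, gfun θ (Lam n ω) ((X i ω, Y i ω), U i ω) := by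
      rw [← Finset.sum_neg_distrib]
      refine Finset.sum_congr rfl fun i _ => ?_
      rw [gfun, logisticLoss]
      ring
    rw [hsum, mul_inv, div_eq_mul_inv]
    ring
  have hnorm : Tendsto (fun j => ‖Lam (m j) ω - lamInf‖) atTop (𝓝 0) := by
    rw [tendsto_iff_norm_sub_tendsto_zero] at hconv
    exact hconv
  have habar_conv : Tendsto (fun j => aBar μ (Lam (m j) ω)) atTop (𝓝 (aBar μ lamInf)) := by
    have h0 : Tendsto (fun j => aBar μ (Lam (m j) ω) - aBar μ lamInf) atTop (𝓝 0) := by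
      apply squeeze_zero_norm (fun j => by
        simpa [Real.norm_eq_abs] using hErLip (Lam (m j) ω) lamInf)
      simpa using hnorm.mul_const Er
    have := h0.add_const (aBar μ lamInf)
    simpa using this
  -- convergence of the numerator averages
  have hAconv : Tendsto (fun j => (∑ i ∈ Finset.range (m j),
      gfun θ (Lam (m j) ω) ((X i ω, Y i ω), U i ω)) / (m j)) atTop (𝓝 L) := by
    rw [Metric.tendsto_nhds]
    intro ε hε
    have h2k : Tendsto (fun k : ℕ => 2 / ((k:ℝ) + 1) * (Er + 1)) atTop (𝓝 0) := by
      have h1 := (tendsto_const_div_atTop_nhds_zero_nat (2:ℝ)).comp (tendsto_add_atTop_nat 1)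
      have h2 : Tendsto (fun k : ℕ => 2 / ((k:ℝ) + 1)) atTop (𝓝 0) := by
        refine h1.congr fun k => ?_
        simp only [Function.comp_apply]
        push_cast
        ring
      simpa using h2.mul_const (Er + 1)
    have hsum0 : Tendsto (fun k : ℕ => mk k + 2 / ((k:ℝ) + 1) * (Er + 1)) atTop (𝓝 0) := by
      simpa using hmk.add h2k
    obtain ⟨k, hk⟩ := (hsum0.eventually (gt_mem_nhds (by positivity : (0:ℝ) < ε/2))).exists
    have hkc : (0:ℝ) < (k:ℝ) + 1 := by positivity
    have hev1 : ∀ᶠ j in atTop, ‖Lam (m j) ω - lamInf‖ ≤ 1 / ((k:ℝ) + 1) := by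
      filter_upwards [hnorm.eventually (gt_mem_nhds (by positivity : (0:ℝ) < 1 / ((k:ℝ)+1)))]
        with j hj
      exact le_of_lt hj
    have hev2 : ∀ᶠ j in atTop, dist ((∑ i ∈ Finset.range (m j),
        gfun θ lamInf ((X i ω, Y i ω), U i ω)) / (m j)) L < ε/4 :=
      (hS1.comp hm).eventually (Metric.ball_mem_nhds L (by positivity))
    have hev3 : ∀ᶠ j in atTop, dist ((∑ i ∈ Finset.range (m j),
        tfun θ lamInf k ((X i ω, Y i ω), U i ω)) / (m j)) (mk k) < ε/8 :=
      ((hS3 k).comp hm).eventually (Metric.ball_mem_nhds _ (by positivity))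
    have hev4 : ∀ᶠ j in atTop, dist ((∑ i ∈ Finset.range (m j), ‖X i ω‖) / (m j)) Er < 1 :=
      (hS2.comp hm).eventually (Metric.ball_mem_nhds _ one_pos)
    filter_upwards [hev1, hev2, hev3, hev4] with j h1 h2 h3 h4
    set n := m j with hn
    set Aj := (∑ i ∈ Finset.range n, gfun θ (Lam n ω) ((X i ω, Y i ω), U i ω)) / n with hAj
    set Gj := (∑ i ∈ Finset.range n, gfun θ lamInf ((X i ω, Y i ω), U i ω)) / n with hGj
    set Tj := (∑ i ∈ Finset.range n, tfun θ lamInf k ((X i ω, Y i ω), U i ω)) / n with hTj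
    set Sj := (∑ i ∈ Finset.range n, ‖X i ω‖) / n with hSj
    have hTj0 : 0 ≤ Tj := by
      rw [hTj]
      apply div_nonneg _ (Nat.cast_nonneg n)
      exact Finset.sum_nonneg fun i _ => tfun_nonneg θ lamInf k _
    have hdiff : |Aj - Gj| ≤ Tj + 2 / ((k:ℝ) + 1) * Sj := by
      have hnum : |∑ i ∈ Finset.range n, (gfun θ (Lam n ω) ((X i ω, Y i ω), U i ω)
          - gfun θ lamInf ((X i ω, Y i ω), U i ω))|
          ≤ ∑ i ∈ Finset.range n,
            (tfun θ lamInf k ((X i ω, Y i ω), U i ω) + 2 / ((k:ℝ) + 1) * ‖X i ω‖) := by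
        refine (Finset.abs_sum_le_sum_abs _ _).trans (Finset.sum_le_sum fun i _ => ?_)
        have hd := gfun_diff_le θ lamInf (Lam n ω) ((X i ω, Y i ω), U i ω)
          (hgood i) k h1
        have hb : 2 * (‖Lam n ω - lamInf‖ * ‖X i ω‖) ≤ 2 / ((k:ℝ) + 1) * ‖X i ω‖ := by
          have := mul_le_mul_of_nonneg_right h1 (norm_nonneg (X i ω))
          calc 2 * (‖Lam n ω - lamInf‖ * ‖X i ω‖) ≤ 2 * (1 / ((k:ℝ)+1) * ‖X i ω‖) := by
                linarith
            _ = 2 / ((k:ℝ) + 1) * ‖X i ω‖ := by ring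
        exact hd.trans (by linarith)
      have heq : Aj - Gj = (∑ i ∈ Finset.range n,
          (gfun θ (Lam n ω) ((X i ω, Y i ω), U i ω)
            - gfun θ lamInf ((X i ω, Y i ω), U i ω))) / n := by
        rw [hAj, hGj, Finset.sum_sub_distrib, sub_div]
      rw [heq, abs_div, Nat.abs_cast]
      calc |∑ i ∈ Finset.range n, (gfun θ (Lam n ω) ((X i ω, Y i ω), U i ω)
            - gfun θ lamInf ((X i ω, Y i ω), U i ω))| / (n:ℝ)
          ≤ (∑ i ∈ Finset.range n, (tfun θ lamInf k ((X i ω, Y i ω), U i ω)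
              + 2 / ((k:ℝ) + 1) * ‖X i ω‖)) / (n:ℝ) :=
            div_mono_nonneg hnum (Nat.cast_nonneg n)
        _ = Tj + 2 / ((k:ℝ) + 1) * Sj := by
            rw [hTj, hSj, Finset.sum_add_distrib, add_div, ← Finset.mul_sum,
              mul_div_assoc]
    have hT : Tj ≤ mk k + ε/8 := by
      rw [Real.dist_eq] at h3
      have := abs_le.1 (le_of_lt h3)
      linarith [this.2]
    have hS : Sj ≤ Er + 1 := by
      rw [Real.dist_eq] at h4
      have := abs_le.1 (le_of_lt h4)
      linarith [this.2]
    have hmul : 2 / ((k:ℝ) + 1) * Sj ≤ 2 / ((k:ℝ) + 1) * (Er + 1) :=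
      mul_le_mul_of_nonneg_left hS (by positivity)
    rw [Real.dist_eq] at h2 ⊢
    have habs2 := abs_le.1 (le_of_lt h2)
    calc |Aj - L| ≤ |Aj - Gj| + |Gj - L| := by
          have : Aj - L = (Aj - Gj) + (Gj - L) := by ring
          rw [this]; exact abs_add_le _ _
      _ < (Tj + 2 / ((k:ℝ) + 1) * Sj) + ε/4 := by
          have := abs_lt.1 h2
          linarith [hdiff]
      _ ≤ (mk k + ε/8 + 2 / ((k:ℝ) + 1) * (Er + 1)) + ε/4 := by linarith
      _ < ε := by linarith
  have hfinal := (habar_conv.inv₀ (ne_of_gt habar)).mul hAconv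
  refine Tendsto.congr (fun j => (hQid (m j)).symm) hfinal


include hXmeas hYmeas hUmeas hLammeas in
lemma meas_Qhat (hY : ∀ᵐ xy ∂μ, xy.2 = 0 ∨ xy.2 = 1)
    (hX : Integrable (fun xy : Evec d × ℝ => ‖xy.1‖) μ) (θ : Evec d) (n : ℕ) :
    Measurable fun ω => Qhat μ X Y U Lam n θ ω := by
  have hEr : (0:ℝ) ≤ ∫ xy, ‖xy.1‖ ∂μ := integral_nonneg fun _ => norm_nonneg _
  have cont_aBar : Continuous (aBar μ) := by
    refine LipschitzWith.continuous (K := (∫ xy, ‖xy.1‖ ∂μ).toNNReal)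
      (LipschitzWith.of_dist_le_mul fun a b => ?_)
    rw [Real.dist_eq, dist_eq_norm]
    calc |aBar μ a - aBar μ b| ≤ ‖a - b‖ * ∫ xy, ‖xy.1‖ ∂μ := aBar_lip μ hY hX a b
      _ ≤ ((∫ xy, ‖xy.1‖ ∂μ).toNNReal : ℝ) * ‖a - b‖ := by
          rw [Real.coe_toNNReal _ hEr, mul_comm]
  have hacc2 : Continuous fun p : Evec d × (Evec d × ℝ) => accProb p.1 p.2 := by
    unfold accProb
    apply Continuous.abs
    apply Continuous.sub (continuous_snd.snd)
    exact cont_sigm.comp (continuous_inner.comp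
      (continuous_fst.prodMk continuous_snd.fst))
  apply Measurable.mul
  · apply Measurable.neg
    apply Measurable.inv
    exact measurable_const.mul (cont_aBar.measurable.comp (hLammeas n))
  · apply Finset.measurable_sum
    intro i _
    apply Measurable.mul
    · refine Measurable.ite (measurableSet_le (hUmeas i) ?_) measurable_const measurable_const
      exact hacc2.measurable.comp ((hLammeas n).prodMk ((hXmeas i).prodMk (hYmeas i)))
    · have hinner : Measurable fun ω => ⟪θ - Lam n ω, X i ω⟫ :=
        Measurable.inner (measurable_const.sub (hLammeas n)) (hXmeas i)
      exact ((hYmeas i).mul hinner).sub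
        (Real.measurable_log.comp (measurable_const.add (Real.measurable_exp.comp hinner)))


end Teight

/-- **Proposition 2, pointwise convergence.** If `E‖X‖ < ∞` and the (possibly
data-dependent) pilots satisfy `λ_n → λ_∞` in probability, then for each fixed `θ` the
empirical local case-control risk converges in probability: `Q̂_{λ_n}(θ) → Q_{λ_∞}(θ)`. -/
theorem Qhat_tendstoInMeasure_pointwise {d : ℕ}
    (μ : Measure (Evec d × ℝ)) [IsProbabilityMeasure μ]
    (hY : ∀ᵐ xy ∂μ, xy.2 = 0 ∨ xy.2 = 1)
    (hX : Integrable (fun xy : Evec d × ℝ => ‖xy.1‖) μ)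
    {Ω : Type*} [MeasurableSpace Ω] (P : Measure Ω) [IsProbabilityMeasure P]
    (X : ℕ → Ω → Evec d) (Y U : ℕ → Ω → ℝ) (Lam : ℕ → Ω → Evec d)
    (hXmeas : ∀ i, Measurable (X i)) (hYmeas : ∀ i, Measurable (Y i))
    (hUmeas : ∀ i, Measurable (U i)) (hLammeas : ∀ n, Measurable (Lam n))
    (hiid : iIndepFun (fun i ω => (X i ω, Y i ω)) P)
    (hlaw : ∀ i, Measure.map (fun ω => (X i ω, Y i ω)) P = μ)
    (hUiid : iIndepFun U P)
    (hUlaw : ∀ i, Measure.map (U i) P = volume.restrict (Set.Ioo (0 : ℝ) 1))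
    (hUindep : IndepFun (fun ω => fun i => U i ω)
      (fun ω => ((fun i => (X i ω, Y i ω)), fun n => Lam n ω)) P)
    (lamInf : Evec d)
    (hpilot : TendstoInMeasure P Lam atTop fun _ => lamInf)
    (θ : Evec d) :
    TendstoInMeasure P (fun n ω => Qhat μ X Y U Lam n θ ω) atTop
      fun _ => Qpop μ lamInf θ := by
  have habar := aBar_pos μ hY lamInf
  set Er : ℝ := ∫ xy, ‖xy.1‖ ∂μ with hEr
  have hEr0 : 0 ≤ Er := integral_nonneg fun _ => norm_nonneg _
  set L : ℝ := aBar μ lamInf * Rpop μ lamInf (θ - lamInf) with hL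
  have hQpop : (aBar μ lamInf)⁻¹ * L = Qpop μ lamInf θ := by
    rw [hL, Qpop, inv_mul_cancel_left₀ (ne_of_gt habar)]
  -- the a.s. good event
  have hS1 : ∀ᵐ ω ∂P, Tendsto (fun n => (∑ i ∈ Finset.range n,
      gfun θ lamInf ((X i ω, Y i ω), U i ω)) / n) atTop (𝓝 L) := by
    have := slln_comp μ P X Y U Lam hXmeas hYmeas hUmeas hiid hlaw hUiid hUlaw hUindep
      (gfun θ lamInf) (meas_gfun θ lamInf) (integrable_gfun μ hY hX θ lamInf)
    rw [gfun_int_eq μ hY hX θ lamInf] at this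
    exact this
  have hS2 : ∀ᵐ ω ∂P, Tendsto (fun n => (∑ i ∈ Finset.range n, ‖X i ω‖) / n)
      atTop (𝓝 Er) := by
    have := slln_comp μ P X Y U Lam hXmeas hYmeas hUmeas hiid hlaw hUiid hUlaw hUindep
      (fun v => ‖v.1.1‖) (by fun_prop) (integrable_norm_pi μ hX)
    rw [int_norm_pi μ] at this
    exact this
  have hS3 : ∀ᵐ ω ∂P, ∀ k : ℕ, Tendsto (fun n => (∑ i ∈ Finset.range n,
      tfun θ lamInf k ((X i ω, Y i ω), U i ω)) / n) atTop
      (𝓝 (∫ v, tfun θ lamInf k v ∂(μ.prod (volume.restrict (Set.Ioo (0 : ℝ) 1))))) := by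
    rw [ae_all_iff]
    intro k
    exact slln_comp μ P X Y U Lam hXmeas hYmeas hUmeas hiid hlaw hUiid hUlaw hUindep
      (tfun θ lamInf k) (meas_tfun θ lamInf k) (integrable_tfun μ hX θ lamInf k)
  have hYae := Y_good μ P X Y hXmeas hYmeas hlaw hY
  -- main contradiction argument
  intro ε hε
  by_contra hnot
  rw [ENNReal.tendsto_nhds_zero] at hnot
  push_neg at hnot
  obtain ⟨δ, hδ, hfreq⟩ := hnot
  obtain ⟨φ, hφmono, hφ⟩ := extraction_of_frequently_atTop hfreq
  have hpilotφ : TendstoInMeasure P (fun k => Lam (φ k)) atTop fun _ => lamInf :=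
    fun e he => (hpilot e he).comp hφmono.tendsto_atTop
  obtain ⟨ψ, hψmono, hae⟩ := hpilotφ.exists_seq_tendsto_ae
  have hm : Tendsto (fun k => φ (ψ k)) atTop atTop :=
    (hφmono.comp hψmono).tendsto_atTop
  have haeQ : ∀ᵐ ω ∂P, Tendsto (fun k => Qhat μ X Y U Lam (φ (ψ k)) θ ω) atTop
      (𝓝 (Qpop μ lamInf θ)) := by
    filter_upwards [hYae, hS1, hS2, hS3, hae] with ω hg1 hg2 hg3 hg4 hω
    have := key_tendsto μ X Y U Lam hXmeas hYmeas hUmeas hLammeas hY hX θ lamInf L Er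
      hEr0 (fun k => ∫ v, tfun θ lamInf k v ∂(μ.prod (volume.restrict (Set.Ioo (0 : ℝ) 1)))) (tfun_int_tendsto μ hX θ lamInf)
      ω hg1 hg2 hg3 hg4 (fun lam lam' => by rw [hEr]; exact aBar_lip μ hY hX lam lam')
      (fun k => φ (ψ k)) hm hω
    rwa [hQpop] at this
  have htm := tendstoInMeasure_of_tendsto_ae
    (fun k => (meas_Qhat μ X Y U Lam hXmeas hYmeas hUmeas hLammeas hY hX θ
      (φ (ψ k))).aestronglyMeasurable) haeQ
  have hδtop : δ ≠ ⊤ := by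
    have h1 := hφ 0
    have h2 : P {ω | ε ≤ edist (Qhat μ X Y U Lam (φ 0) θ ω) (Qpop μ lamInf θ)} ≤ 1 :=
      prob_le_one
    exact ne_top_of_lt (lt_of_lt_of_le h1 (le_trans h2 le_top))
  have hev := ENNReal.tendsto_nhds_zero.mp (htm ε hε) (δ/2)
    (ENNReal.half_pos (ne_of_gt hδ))
  obtain ⟨k, hk⟩ := hev.exists
  have hlt := hφ (ψ k)
  have hhalf : δ / 2 < δ := ENNReal.half_lt_self (ne_of_gt hδ) hδtop
  exact absurd (lt_trans (lt_of_lt_of_le hlt hk) hhalf) (lt_irrefl δ)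
end
end

section
/- In the weighted local case-control scheme with multiplier c ≥ 1, correctly specified model f(x) = θ_0'x and pilot λ = θ_0: conditionally on X = x, with p = σ(θ_0'x), the acceptance indicator Z and weight W satisfy E[Y Z W | X = x] = c p(1−p), E[Z W | X = x] = 2 c p(1−p), and E[Z W² | X = x] ≤ c(c+1) p(1−p). -/
open MeasureTheory ProbabilityTheory Real Filter
open scoped ENNReal NNReal RealInnerProductSpace Topology BoundedContinuousFunction

noncomputable section

variable {d : ℕ}

lemma my_int_dirac {α : Type*} [MeasurableSpace α] (f : α → ℝ) (hf : Measurable f)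
    (a : α) : Integrable f (Measure.dirac a) :=
  ⟨hf.aestronglyMeasurable, by
    rw [HasFiniteIntegral, lintegral_dirac' _ hf.enorm]
    exact ENNReal.coe_lt_top⟩

lemma four_dirac (f : ℝ×ℝ×ℝ → ℝ) (hf : Measurable f) (a b c e : ℝ≥0∞)
    (ha : a ≠ ⊤) (hb : b ≠ ⊤) (hc : c ≠ ⊤) (he : e ≠ ⊤) (u v w z : ℝ×ℝ×ℝ) :
    ∫ t, f t ∂(a • Measure.dirac u + b • Measure.dirac v + c • Measure.dirac w
      + e • Measure.dirac z) =
      a.toReal * f u + b.toReal * f v + c.toReal * f w + e.toReal * f z := by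
  have ia := (my_int_dirac f hf u).smul_measure ha
  have ib := (my_int_dirac f hf v).smul_measure hb
  have ic := (my_int_dirac f hf w).smul_measure hc
  have ie := (my_int_dirac f hf z).smul_measure he
  rw [integral_add_measure (((ia.add_measure ib).add_measure ic)) ie,
    integral_add_measure (ia.add_measure ib) ic, integral_add_measure ia ib]
  simp [integral_smul_measure, integral_dirac' f _ hf.stronglyMeasurable, smul_eq_mul]

/-- In the weighted local case-control scheme with multiplier `c ≥ 1`,
correctly specified model and pilot `θ₀`: conditionally on `X = x`, writing `p = σ(θ₀'x)`,
the conditional law `m x` of `(Y, Z, W)` (response, acceptance indicator, weight) satisfies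
`E[Y Z W | X = x] = c p (1-p)`, `E[Z W | X = x] = 2 c p (1-p)` and
`E[Z W² | X = x] ≤ c (c+1) p (1-p)`. -/
theorem weighted_lcc_conditional_moments {d : ℕ}
    (θ0 : Evec d) (c : ℝ) (hc : 1 ≤ c)
    (m : Evec d → Measure (ℝ × ℝ × ℝ))
    (hm : ∀ x : Evec d,
      m x =
        ENNReal.ofReal (sigm ⟪θ0, x⟫ * min (c * (1 - sigm ⟪θ0, x⟫)) 1) •
            Measure.dirac ((1 : ℝ), (1 : ℝ), max (c * (1 - sigm ⟪θ0, x⟫)) 1) +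
          ENNReal.ofReal (sigm ⟪θ0, x⟫ * (1 - min (c * (1 - sigm ⟪θ0, x⟫)) 1)) •
            Measure.dirac ((1 : ℝ), (0 : ℝ), max (c * (1 - sigm ⟪θ0, x⟫)) 1) +
          ENNReal.ofReal ((1 - sigm ⟪θ0, x⟫) * min (c * sigm ⟪θ0, x⟫) 1) •
            Measure.dirac ((0 : ℝ), (1 : ℝ), max (c * sigm ⟪θ0, x⟫) 1) +
          ENNReal.ofReal ((1 - sigm ⟪θ0, x⟫) * (1 - min (c * sigm ⟪θ0, x⟫) 1)) •
            Measure.dirac ((0 : ℝ), (0 : ℝ), max (c * sigm ⟪θ0, x⟫) 1)) :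
    ∀ x : Evec d,
      (∫ t, t.1 * t.2.1 * t.2.2 ∂(m x) =
        c * sigm ⟪θ0, x⟫ * (1 - sigm ⟪θ0, x⟫)) ∧
      (∫ t, t.2.1 * t.2.2 ∂(m x) =
        2 * c * sigm ⟪θ0, x⟫ * (1 - sigm ⟪θ0, x⟫)) ∧
      ∫ t, t.2.1 * t.2.2 ^ 2 ∂(m x) ≤
        c * (c + 1) * sigm ⟪θ0, x⟫ * (1 - sigm ⟪θ0, x⟫) := by
  intro x
  set p := sigm ⟪θ0, x⟫ with hpdef
  have hp0 : 0 < p := sigm_pos _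
  have hp1 : p < 1 := sigm_lt_one _
  have hm1 : (0:ℝ) ≤ min (c * (1 - p)) 1 := le_min (by nlinarith) zero_le_one
  have hm2 : (0:ℝ) ≤ min (c * p) 1 := le_min (by nlinarith) zero_le_one
  have hm1' : min (c * (1 - p)) 1 ≤ 1 := min_le_right _ _
  have hm2' : min (c * p) 1 ≤ 1 := min_le_right _ _
  have key : ∀ f : ℝ×ℝ×ℝ → ℝ, Measurable f →
      ∫ t, f t ∂(m x) =
        (p * min (c * (1 - p)) 1) * f (1, 1, max (c * (1 - p)) 1) +
        (p * (1 - min (c * (1 - p)) 1)) * f (1, 0, max (c * (1 - p)) 1) +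
        ((1 - p) * min (c * p) 1) * f (0, 1, max (c * p) 1) +
        ((1 - p) * (1 - min (c * p) 1)) * f (0, 0, max (c * p) 1) := by
    intro f hf
    rw [hm x]
    rw [four_dirac f hf _ _ _ _ ENNReal.ofReal_ne_top ENNReal.ofReal_ne_top
      ENNReal.ofReal_ne_top ENNReal.ofReal_ne_top]
    rw [ENNReal.toReal_ofReal (by nlinarith), ENNReal.toReal_ofReal (by nlinarith),
      ENNReal.toReal_ofReal (by nlinarith), ENNReal.toReal_ofReal (by nlinarith)]
  have h1 := key (fun t => t.1 * t.2.1 * t.2.2)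
    (by fun_prop)
  have h2 := key (fun t => t.2.1 * t.2.2) (by fun_prop)
  have h3 := key (fun t => t.2.1 * t.2.2 ^ 2) (by fun_prop)
  simp only at h1 h2 h3
  refine ⟨?_, ?_, ?_⟩
  · rw [h1]
    rcases le_total (c * (1 - p)) 1 with h | h <;>
      simp [min_eq_left, min_eq_right, max_eq_left, max_eq_right, h] <;> ring
  · rw [h2]
    rcases le_total (c * (1 - p)) 1 with h | h <;>
    rcases le_total (c * p) 1 with h' | h' <;>
      simp [min_eq_left, min_eq_right, max_eq_left, max_eq_right, h, h'] <;> ring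
  · rw [h3]
    rcases le_total (c * (1 - p)) 1 with h | h <;>
    rcases le_total (c * p) 1 with h' | h' <;>
      simp only [min_eq_left, min_eq_right, max_eq_left, max_eq_right, h, h']
    · nlinarith [mul_nonneg (mul_nonneg (by linarith : (0:ℝ) ≤ c) hp0.le)
        (mul_nonneg (by linarith : (0:ℝ) ≤ 1 - p) (by linarith : (0:ℝ) ≤ c - 1))]
    · nlinarith [mul_nonneg (mul_nonneg (sq_nonneg c) hp0.le) (sq_nonneg (1 - p))]
    · nlinarith [mul_nonneg (mul_nonneg (sq_nonneg c) (sq_nonneg p))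
        (by linarith : (0:ℝ) ≤ 1 - p)]
    · nlinarith [mul_nonneg (mul_nonneg (by linarith : (0:ℝ) ≤ c) hp0.le)
        (by linarith : (0:ℝ) ≤ 1 - p)]
end
end
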